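/- arXiv:2407.06919 — 14 statements merged into one kernel-verified Lean document; each statement's English description precedes it below -/
import Mathlib

section
/- Let d ≥ 1, let n ∈ ℝ^d with ‖n‖ = 1, let v ∈ ℝ^d, let ρ ∈ ℝ with ρ ≠ 0, and let c ∈ ℝ. Then the characteristic polynomial of the phasic coefficient matrix B(v,ρ,c,n) satisfies, for every λ ∈ ℝ, det(B(v,ρ,c,n) − λ·I_{d+1}) = (v·n − λ)^{d−1} · ((v·n − λ)² − c²). In particular the eigenvalues of B(v,ρ,c,n) are v·n (with algebraic multiplicity d−1) and v·n ± c. -/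
open scoped RealInnerProductSpace

/-- The phasic coefficient matrix `B(v,ρ,c,n)` of one component of the barotropic
Baer–Nunziato model in primitive variables, projected onto the direction `n`:
top-left `d×d` block `(v·n)·I_d`, top-right block `ρ⁻¹·n`, bottom-left block `ρc²·nᵀ`,
bottom-right entry `v·n`. -/
noncomputable def phasicB (d : ℕ) (v n : EuclideanSpace ℝ (Fin d)) (ρ c : ℝ) :
    Matrix (Fin d ⊕ Unit) (Fin d ⊕ Unit) ℝ :=
  Matrix.fromBlocks
    (⟪v, n⟫ • (1 : Matrix (Fin d) (Fin d) ℝ))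
    (Matrix.of fun i _ => ρ⁻¹ * n i)
    (Matrix.of fun _ j => ρ * c ^ 2 * n j)
    (⟪v, n⟫ • (1 : Matrix Unit Unit ℝ))

lemma phasicB_key (d : ℕ) (hd : 1 ≤ d) (n : EuclideanSpace ℝ (Fin d))
    (hn : ‖n‖ = 1) (v : EuclideanSpace ℝ (Fin d)) (ρ : ℝ) (hρ : ρ ≠ 0) (c : ℝ) (lam : ℝ)
    (hμ : ⟪v, n⟫ - lam ≠ 0) :
    (phasicB d v n ρ c - lam • (1 : Matrix (Fin d ⊕ Unit) (Fin d ⊕ Unit) ℝ)).det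
      = (⟪v, n⟫ - lam) ^ (d - 1) * ((⟪v, n⟫ - lam) ^ 2 - c ^ 2) := by
  set μ : ℝ := ⟪v, n⟫ - lam with hμdef
  have hsum : (∑ j, n j * n j) = 1 := by
    have h1 : ⟪n, n⟫ = (1 : ℝ) := by
      rw [real_inner_self_eq_norm_sq, hn]; norm_num
    rw [← h1, PiLp.inner_apply]
    simp [RCLike.inner_apply]
    simp only [sq]
  have hmat : phasicB d v n ρ c - lam • (1 : Matrix (Fin d ⊕ Unit) (Fin d ⊕ Unit) ℝ)
      = Matrix.fromBlocks (μ • (1 : Matrix (Fin d) (Fin d) ℝ))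
          (Matrix.of fun i _ => ρ⁻¹ * n i)
          (Matrix.of fun _ j => ρ * c ^ 2 * n j)
          (μ • (1 : Matrix Unit Unit ℝ)) := by
    rw [phasicB, ← Matrix.fromBlocks_one, Matrix.fromBlocks_smul, sub_eq_add_neg,
      Matrix.fromBlocks_neg, Matrix.fromBlocks_add]
    simp [hμdef, sub_smul, sub_eq_add_neg, add_smul, neg_smul]
  rw [hmat]
  letI : Invertible (μ • (1 : Matrix (Fin d) (Fin d) ℝ)) :=
    ⟨μ⁻¹ • (1 : Matrix (Fin d) (Fin d) ℝ),
      by rw [Matrix.smul_mul, Matrix.mul_smul, Matrix.one_mul, smul_smul,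
        inv_mul_cancel₀ hμ, one_smul],
      by rw [Matrix.smul_mul, Matrix.mul_smul, Matrix.one_mul, smul_smul,
        mul_inv_cancel₀ hμ, one_smul]⟩
  rw [Matrix.det_fromBlocks₁₁]
  have hinv : ⅟ (μ • (1 : Matrix (Fin d) (Fin d) ℝ)) = μ⁻¹ • (1 : Matrix (Fin d) (Fin d) ℝ) :=
    rfl
  have hdetA : (μ • (1 : Matrix (Fin d) (Fin d) ℝ)).det = μ ^ d := by
    simp [Matrix.det_smul]
  rw [hinv, hdetA, Matrix.det_unique]
  have hc : (∑ j, ρ * c ^ 2 * n j * (μ⁻¹ * (ρ⁻¹ * n j))) = μ⁻¹ * c ^ 2 := by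
    rw [Finset.sum_congr rfl (fun j _ => by ring :
      ∀ j ∈ Finset.univ, ρ * c ^ 2 * n j * (μ⁻¹ * (ρ⁻¹ * n j))
        = (ρ * ρ⁻¹) * (μ⁻¹ * c ^ 2) * (n j * n j)),
      ← Finset.mul_sum, hsum, mul_inv_cancel₀ hρ]
    ring
  simp only [Matrix.sub_apply, Matrix.smul_apply, Matrix.one_apply_eq, smul_eq_mul, mul_one,
    Matrix.mul_smul, Matrix.smul_mul, Matrix.mul_one, Matrix.mul_apply, Matrix.of_apply,
    Finset.mul_sum]
  rw [Finset.sum_congr rfl (fun j _ => by ring :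
    ∀ j ∈ Finset.univ, μ⁻¹ * (ρ * c ^ 2 * n j * (ρ⁻¹ * n j))
      = ρ * c ^ 2 * n j * (μ⁻¹ * (ρ⁻¹ * n j))), hc]
  have hd' : μ ^ d = μ ^ (d - 1) * μ := by
    rw [← pow_succ, Nat.sub_add_cancel hd]
  rw [hd']
  field_simp

/-- Characteristic polynomial of the phasic coefficient matrix:
`det(B − λI) = (v·n − λ)^(d−1) ((v·n − λ)² − c²)`. -/
theorem phasicB_charpoly (d : ℕ) (hd : 1 ≤ d) (n : EuclideanSpace ℝ (Fin d))
    (hn : ‖n‖ = 1) (v : EuclideanSpace ℝ (Fin d)) (ρ : ℝ) (hρ : ρ ≠ 0) (c : ℝ) (lam : ℝ) :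
    (phasicB d v n ρ c - lam • (1 : Matrix (Fin d ⊕ Unit) (Fin d ⊕ Unit) ℝ)).det
      = (⟪v, n⟫ - lam) ^ (d - 1) * ((⟪v, n⟫ - lam) ^ 2 - c ^ 2) := by
  have hf : Continuous fun x : ℝ =>
      (phasicB d v n ρ c - x • (1 : Matrix (Fin d ⊕ Unit) (Fin d ⊕ Unit) ℝ)).det := by
    refine Continuous.matrix_det ?_
    exact continuous_const.sub (continuous_id.smul continuous_const)
  have hg : Continuous fun x : ℝ =>
      (⟪v, n⟫ - x) ^ (d - 1) * ((⟪v, n⟫ - x) ^ 2 - c ^ 2) := by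
    fun_prop
  have heq := Continuous.ext_on (dense_compl_singleton (⟪v, n⟫ : ℝ)) hf hg ?_
  · exact congrFun heq lam
  · intro x hx
    exact phasicB_key d hd n hn v ρ hρ c x (sub_ne_zero.mpr (Ne.symm hx))
end

section
/- Let d ≥ 1, K ≥ 1, let n ∈ ℝ^d with ‖n‖ = 1, let V ∈ ℝ, and for each k ∈ {1,…,K} let v_k ∈ ℝ^d, ρ_k ≠ 0, c_k ∈ ℝ, and let A_k be an arbitrary real (d+1)×(K−1) matrix. Let M be the square real matrix of size (K−1)+K(d+1) with the block structure: the top-left (K−1)×(K−1) block equals V·I_{K−1}; for each k, the block in block-row k and the first block-column equals A_k and the k-th diagonal block equals the phasic coefficient matrix B(v_k,ρ_k,c_k,n); all other blocks are zero. Then for every λ ∈ ℝ, det(M − λ·I) = (V − λ)^{K−1} · ∏_{k=1}^{K} (v_k·n − λ)^{d−1}·((v_k·n − λ)² − c_k²). In particular the eigenvalues of M are V (multiplicity ≥ K−1), v_k·n (multiplicity ≥ d−1 each) and v_k·n ± c_k, k = 1,…,K. -/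
open scoped RealInnerProductSpace

/-- The coefficient matrix `B_n` of the `K`-component barotropic Baer–Nunziato model
in primitive variables projected onto direction `n`: top-left block `V·I_{K-1}`,
top-right block `0`, coupling blocks `A_k` in the first block-column, and the phasic
coefficient matrices `B(v_k,ρ_k,c_k,n)` as diagonal blocks. -/
noncomputable def bnMatrix (d K : ℕ) (n : EuclideanSpace ℝ (Fin d)) (V : ℝ)
    (v : Fin K → EuclideanSpace ℝ (Fin d)) (ρ c : Fin K → ℝ)
    (A : Fin K → Matrix (Fin d ⊕ Unit) (Fin (K - 1)) ℝ) :
    Matrix (Fin (K - 1) ⊕ ((Fin d ⊕ Unit) × Fin K))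
      (Fin (K - 1) ⊕ ((Fin d ⊕ Unit) × Fin K)) ℝ :=
  Matrix.fromBlocks (V • (1 : Matrix (Fin (K - 1)) (Fin (K - 1)) ℝ)) 0
    (Matrix.of fun p j => A p.2 p.1 j)
    (Matrix.blockDiagonal fun k => phasicB d (v k) n (ρ k) (c k))

open Matrix Polynomial

lemma key_ne (d : ℕ) (hd : 1 ≤ d) (m : Fin d → ℝ) (hm : ∑ i, m i * m i = 1)
    (ρ c : ℝ) (hρ : ρ ≠ 0) (a : ℝ) (ha : a ≠ 0) :
    (Matrix.fromBlocks (a • (1 : Matrix (Fin d) (Fin d) ℝ))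
      (Matrix.of fun i (_ : Unit) => ρ⁻¹ * m i)
      (Matrix.of fun (_ : Unit) j => ρ * c ^ 2 * m j)
      (a • (1 : Matrix Unit Unit ℝ))).det = a ^ (d - 1) * (a ^ 2 - c ^ 2) := by
  haveI : Invertible (a • (1 : Matrix (Fin d) (Fin d) ℝ)) :=
    ⟨a⁻¹ • (1 : Matrix (Fin d) (Fin d) ℝ),
      by rw [smul_mul_smul_comm, inv_mul_cancel₀ ha, one_smul, one_mul],
      by rw [smul_mul_smul_comm, mul_inv_cancel₀ ha, one_smul, one_mul]⟩
  have hinv : ⅟ (a • (1 : Matrix (Fin d) (Fin d) ℝ)) = a⁻¹ • 1 :=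
    invOf_eq_right_inv (by rw [smul_mul_smul_comm, mul_inv_cancel₀ ha, one_smul, one_mul])
  rw [det_fromBlocks₁₁, hinv]
  have h1 : (Matrix.of fun (_ : Unit) j => ρ * c ^ 2 * m j) * (a⁻¹ • (1 : Matrix (Fin d) (Fin d) ℝ))
      * (Matrix.of fun i (_ : Unit) => ρ⁻¹ * m i)
      = Matrix.of fun (_ : Unit) (_ : Unit) => a⁻¹ * c ^ 2 := by
    ext i j
    simp only [Matrix.mul_apply, Matrix.of_apply, Matrix.smul_apply, Matrix.one_apply,
      smul_eq_mul, mul_ite, mul_one, mul_zero, Finset.sum_ite_eq, Finset.sum_ite_eq', Finset.mem_univ, if_true]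
    calc ∑ x, ρ * c ^ 2 * m x * a⁻¹ * (ρ⁻¹ * m x)
        = ∑ x, (a⁻¹ * c ^ 2) * (m x * m x) := by
          refine Finset.sum_congr rfl fun x _ => ?_
          field_simp
      _ = a⁻¹ * c ^ 2 := by rw [← Finset.mul_sum, hm, mul_one]
  rw [h1]
  have hdet1 : ((a • (1 : Matrix Unit Unit ℝ)) - Matrix.of fun (_ : Unit) (_ : Unit) => a⁻¹ * c ^ 2).det
      = a - a⁻¹ * c ^ 2 := by
    rw [Matrix.det_unique]
    simp [Matrix.one_apply]
  rw [hdet1, Matrix.det_smul, Matrix.det_one]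
  obtain ⟨e, rfl⟩ : ∃ e, d = e + 1 := ⟨d - 1, (Nat.succ_pred_eq_of_pos hd).symm⟩
  simp only [Fintype.card_fin, Nat.add_sub_cancel, mul_one]
  rw [pow_succ]
  field_simp

lemma key (d : ℕ) (hd : 1 ≤ d) (m : Fin d → ℝ) (hm : ∑ i, m i * m i = 1)
    (ρ c : ℝ) (hρ : ρ ≠ 0) (a : ℝ) :
    (Matrix.fromBlocks (a • (1 : Matrix (Fin d) (Fin d) ℝ))
      (Matrix.of fun i (_ : Unit) => ρ⁻¹ * m i)
      (Matrix.of fun (_ : Unit) j => ρ * c ^ 2 * m j)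
      (a • (1 : Matrix Unit Unit ℝ))).det = a ^ (d - 1) * (a ^ 2 - c ^ 2) := by
  set P : Matrix (Fin d ⊕ Unit) (Fin d ⊕ Unit) ℝ[X] :=
    Matrix.fromBlocks (((X : ℝ[X])) • (1 : Matrix (Fin d) (Fin d) ℝ[X]))
      (Matrix.of fun i (_ : Unit) => Polynomial.C (ρ⁻¹ * m i))
      (Matrix.of fun (_ : Unit) j => Polynomial.C (ρ * c ^ 2 * m j))
      (((X : ℝ[X])) • (1 : Matrix Unit Unit ℝ[X])) with hP
  have hmap : ∀ t : ℝ, P.map (Polynomial.evalRingHom t)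
      = Matrix.fromBlocks (t • (1 : Matrix (Fin d) (Fin d) ℝ))
        (Matrix.of fun i (_ : Unit) => ρ⁻¹ * m i)
        (Matrix.of fun (_ : Unit) j => ρ * c ^ 2 * m j)
        (t • (1 : Matrix Unit Unit ℝ)) := by
    intro t
    ext i j
    cases i <;> cases j <;>
      simp [hP, Matrix.map_apply, Matrix.one_apply, apply_ite (Polynomial.eval t)]
  have hdet : ∀ t : ℝ, Polynomial.eval t P.det
      = (Matrix.fromBlocks (t • (1 : Matrix (Fin d) (Fin d) ℝ))
        (Matrix.of fun i (_ : Unit) => ρ⁻¹ * m i)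
        (Matrix.of fun (_ : Unit) j => ρ * c ^ 2 * m j)
        (t • (1 : Matrix Unit Unit ℝ))).det := by
    intro t
    rw [← hmap t]
    exact (Polynomial.evalRingHom t).map_det P
  have hpoly : P.det = X ^ (d - 1) * (X ^ 2 - Polynomial.C (c ^ 2)) := by
    apply Polynomial.eq_of_infinite_eval_eq
    apply Set.Infinite.mono (s := {x : ℝ | x ≠ 0})
    · intro t ht
      simp only [Set.mem_setOf_eq] at ht ⊢
      rw [hdet t, key_ne d hd m hm ρ c hρ t ht]
      simp
    · exact Set.infinite_of_finite_compl (by simp)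
  have := hdet a
  rw [hpoly] at this
  simpa using this.symm

/-- Characteristic polynomial of the Baer–Nunziato coefficient matrix:
`det(M − λI) = (V − λ)^(K−1) ∏_k (v_k·n − λ)^(d−1) ((v_k·n − λ)² − c_k²)`. -/
theorem bnMatrix_charpoly (d K : ℕ) (hd : 1 ≤ d) (hK : 1 ≤ K)
    (n : EuclideanSpace ℝ (Fin d)) (hn : ‖n‖ = 1) (V : ℝ)
    (v : Fin K → EuclideanSpace ℝ (Fin d)) (ρ c : Fin K → ℝ) (hρ : ∀ k, ρ k ≠ 0)
    (A : Fin K → Matrix (Fin d ⊕ Unit) (Fin (K - 1)) ℝ) (lam : ℝ) :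
    (bnMatrix d K n V v ρ c A
        - lam • (1 : Matrix (Fin (K - 1) ⊕ ((Fin d ⊕ Unit) × Fin K))
            (Fin (K - 1) ⊕ ((Fin d ⊕ Unit) × Fin K)) ℝ)).det
      = (V - lam) ^ (K - 1)
          * ∏ k : Fin K,
              ((⟪v k, n⟫ - lam) ^ (d - 1) * ((⟪v k, n⟫ - lam) ^ 2 - (c k) ^ 2)) := by
  have hm : ∑ i, n i * n i = 1 := by
    have h1 : ⟪n, n⟫ = ‖n‖ ^ 2 := real_inner_self_eq_norm_sq n
    have h2 : ⟪n, n⟫ = ∑ i, n i * n i := by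
      rw [PiLp.inner_apply]; simp [RCLike.inner_apply, pow_two]
    rw [← h2, h1, hn]; norm_num
  have hsplit : bnMatrix d K n V v ρ c A - lam • 1
      = Matrix.fromBlocks ((V - lam) • 1) 0 (Matrix.of fun p j => A p.2 p.1 j)
          (Matrix.blockDiagonal fun k => phasicB d (v k) n (ρ k) (c k) - lam • 1) := by
    ext i j
    cases i <;> cases j <;>
      simp [bnMatrix, Matrix.one_apply, Matrix.blockDiagonal_apply, sub_smul,
        Prod.ext_iff, and_comm] <;> aesop
  rw [hsplit, Matrix.det_fromBlocks_zero₁₂, Matrix.det_smul, Matrix.det_one,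
    Matrix.det_blockDiagonal]
  simp only [Fintype.card_fin, mul_one]
  congr 1
  refine Finset.prod_congr rfl fun k _ => ?_
  have hblock : phasicB d (v k) n (ρ k) (c k) - lam • 1
      = Matrix.fromBlocks ((⟪v k, n⟫ - lam) • (1 : Matrix (Fin d) (Fin d) ℝ))
        (Matrix.of fun i (_ : Unit) => (ρ k)⁻¹ * n i)
        (Matrix.of fun (_ : Unit) j => ρ k * (c k) ^ 2 * n j)
        ((⟪v k, n⟫ - lam) • (1 : Matrix Unit Unit ℝ)) := by
    ext i j
    cases i <;> cases j <;>
      simp [phasicB, Matrix.one_apply, sub_smul] <;> aesop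
  rw [hblock]
  exact key d hd (fun i => n i) hm (ρ k) (c k) (hρ k) _
end

section
/- Let d ≥ 1, K ≥ 1, let n ∈ ℝ^d with ‖n‖ = 1, let V ∈ ℝ, and for each k ∈ {1,…,K} let v_k ∈ ℝ^d, ρ_k ≠ 0, c_k ≠ 0, and let A_k be an arbitrary real (d+1)×(K−1) matrix. Let M be the square real matrix of size (K−1)+K(d+1) with the block structure: the top-left (K−1)×(K−1) block equals V·I_{K−1}; for each k, the block in block-row k and the first block-column equals A_k and the k-th diagonal block equals the phasic coefficient matrix B(v_k,ρ_k,c_k,n); all other blocks are zero. Assume the non-resonance condition: V ≠ v_k·n and V ≠ v_k·n ± c_k for every k. Then M is diagonalizable over ℝ, i.e., there exist an invertible real matrix S and a real diagonal matrix D with M = S·D·S⁻¹; equivalently, ℝ^{(K−1)+K(d+1)} admits a basis consisting of eigenvectors of M. -/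
open scoped RealInnerProductSpace

section Aux
open Polynomial Module.End Matrix


lemma aeval_X_sub_C_end {M : Type*} [AddCommGroup M] [Module ℝ M]
    (f : Module.End ℝ M) (t : ℝ) : Polynomial.aeval f (X - C t) = f - t • 1 := by
  simp [Polynomial.aeval_C, Module.algebraMap_end_eq_smul_id]
  rfl

lemma ker_aeval_prod_X_sub_C {M : Type*} [AddCommGroup M] [Module ℝ M]
    (f : Module.End ℝ M) (T : Finset ℝ) :
    LinearMap.ker (Polynomial.aeval f (∏ t ∈ T, (X - C t)))
      = ⨆ t ∈ T, f.eigenspace t := by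
  classical
  induction T using Finset.induction_on with
  | empty => simp [LinearMap.ker_eq_bot']
  | @insert a s ha ih =>
    rw [Finset.prod_insert ha, ← Polynomial.sup_ker_aeval_eq_ker_aeval_mul_of_coprime f
      (IsCoprime.prod_right fun b hb =>
        isCoprime_X_sub_C_of_isUnit_sub (sub_ne_zero_of_ne (by rintro rfl; exact ha hb)).isUnit),
      ih, Finset.iSup_insert, aeval_X_sub_C_end, Module.End.eigenspace,
      Module.End.genEigenspace_one]

lemma matrix_diag_of_aeval {m : Type*} [Fintype m] [DecidableEq m]
    (M : Matrix m m ℝ) (T : Finset ℝ)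
    (h : Polynomial.aeval M (∏ t ∈ T, (X - C t)) = 0) :
    ∃ (S : Matrix m m ℝ) (D : m → ℝ),
      IsUnit S.det ∧ M = S * Matrix.diagonal D * S⁻¹ := by
  classical
  set f : Module.End ℝ (m → ℝ) := Matrix.mulVecLin M with hf
  have hfp : Polynomial.aeval f (∏ t ∈ T, (X - C t)) = 0 := by
    have : f = (Matrix.toLinAlgEquiv' (R := ℝ) (n := m)).toAlgHom M := rfl
    rw [this, Polynomial.aeval_algHom_apply, h, map_zero]
  have htop : (⨆ t : T, f.eigenspace t) = ⊤ := by
    rw [iSup_subtype, ← ker_aeval_prod_X_sub_C, hfp, LinearMap.ker_zero]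
  have hind : iSupIndep (fun t : T => f.eigenspace t) :=
    f.eigenspaces_iSupIndep.comp Subtype.coe_injective
  have internal : DirectSum.IsInternal (fun t : T => f.eigenspace t) :=
    (DirectSum.isInternal_submodule_iff_iSupIndep_and_iSup_eq_top _).mpr ⟨hind, htop⟩
  let vB : ∀ t : T, Module.Basis (Fin (Module.finrank ℝ (f.eigenspace t))) ℝ (f.eigenspace t) :=
    fun t => Module.finBasis ℝ _
  let b := internal.collectedBasis vB
  let e := b.indexEquiv (Pi.basisFun ℝ m)
  let b' := b.reindex e
  let D : m → ℝ := fun i => ((e.symm i).1 : ℝ)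
  have hb' : ∀ i, M.mulVec (b' i) = D i • b' i := by
    intro i
    have hm : b' i ∈ f.eigenspace (D i) := by
      show b.reindex e i ∈ _
      rw [Module.Basis.reindex_apply]
      exact internal.collectedBasis_mem vB (e.symm i)
    have := Module.End.mem_genEigenspace_one.mp hm
    exact this
  let S : Matrix m m ℝ := (Pi.basisFun ℝ m).toMatrix b'
  have hSinv : Invertible S := (Pi.basisFun ℝ m).invertibleToMatrix b'
  have hSdet : IsUnit S.det := S.isUnit_det_of_invertible
  have key : M * S = S * Matrix.diagonal D := by
    ext x i
    have hl : (M * S) x i = M.mulVec (b' i) x := by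
      simp [S, Matrix.mul_apply, Matrix.mulVec, dotProduct,
        Module.Basis.toMatrix_apply, Pi.basisFun_repr]
    rw [hl, hb']
    rw [Matrix.mul_diagonal]
    simp only [S, Module.Basis.toMatrix_apply, Pi.basisFun_repr, Pi.smul_apply, smul_eq_mul]
    ring
  refine ⟨S, D, hSdet, ?_⟩
  rw [← key, Matrix.mul_assoc, Matrix.mul_nonsing_inv _ hSdet, Matrix.mul_one]
lemma phasic_cubic {d : ℕ} (v n : EuclideanSpace ℝ (Fin d)) (ρ c : ℝ) (hρ : ρ ≠ 0)
    (hn : ‖n‖ = 1) :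
    (phasicB d v n ρ c - ⟪v, n⟫ • 1) *
      ((phasicB d v n ρ c - (⟪v, n⟫ + c) • 1) * (phasicB d v n ρ c - (⟪v, n⟫ - c) • 1)) = 0 := by
  set B := phasicB d v n ρ c with hB
  set u := ⟪v, n⟫ with hu
  have hnn : ∑ j, n j * n j = 1 := by
    have h1 : ⟪n, n⟫ = ‖n‖ ^ 2 := real_inner_self_eq_norm_sq n
    have h2 : ⟪n, n⟫ = ∑ j, n j * n j := by
      simp only [PiLp.inner_apply, RCLike.inner_apply, conj_trivial, mul_comm]
    rw [h2] at h1
    rw [h1, hn]; norm_num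
  set nr : Matrix (Fin d) Unit ℝ := Matrix.of fun i _ => ρ⁻¹ * n i with hnr
  set nc : Matrix Unit (Fin d) ℝ := Matrix.of fun _ j => ρ * c ^ 2 * n j with hnc
  set N : Matrix (Fin d ⊕ Unit) (Fin d ⊕ Unit) ℝ := fromBlocks 0 nr nc 0 with hNdef
  have hN : B - u • 1 = N := by
    rw [show (1 : Matrix (Fin d ⊕ Unit) (Fin d ⊕ Unit) ℝ) = fromBlocks 1 0 0 1 from
      (fromBlocks_one).symm, hB, hu, phasicB, fromBlocks_smul, hNdef]
    ext (i | i) (j | j) <;> simp [fromBlocks, hnr, hnc]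
  have hsq : N * N = fromBlocks (nr * nc) 0 0 (nc * nr) := by
    rw [hNdef, fromBlocks_multiply]; simp
  have h1 : (nr * nc) * nr = (c ^ 2) • nr := by
    ext i j
    simp only [Matrix.mul_apply, hnr, hnc, Matrix.of_apply, Matrix.smul_apply, smul_eq_mul,
      Finset.univ_unique, Finset.sum_singleton]
    have key : ∀ x, (ρ⁻¹ * n i) * (ρ * c ^ 2 * n x) * (ρ⁻¹ * n x)
        = (c ^ 2 * (ρ⁻¹ * n i)) * (n x * n x) := by
      intro x; field_simp
    rw [Finset.sum_congr rfl fun x _ => key x, ← Finset.mul_sum, hnn, mul_one]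
  have h2 : (nc * nr) * nc = (c ^ 2) • nc := by
    ext i j
    simp only [Matrix.mul_apply, hnr, hnc, Matrix.of_apply, Matrix.smul_apply, smul_eq_mul,
      Finset.univ_unique, Finset.sum_singleton]
    have key : ∀ x, (ρ * c ^ 2 * n x) * (ρ⁻¹ * n x) * (ρ * c ^ 2 * n j)
        = (c ^ 2 * (ρ * c ^ 2 * n j)) * (n x * n x) := by
      intro x; field_simp
    rw [Finset.sum_mul, Finset.sum_congr rfl fun x _ => key x, ← Finset.mul_sum, hnn, mul_one]
  have hcube : N * N * N = (c ^ 2) • N := by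
    rw [hsq, hNdef, fromBlocks_multiply, fromBlocks_smul]
    simp [h1, h2]
  have expand : (B - (u + c) • 1) * (B - (u - c) • 1) = N * N - (c ^ 2) • 1 := by
    have e1 : B - (u + c) • 1 = N - c • 1 := by rw [← hN, add_smul]; abel
    have e2 : B - (u - c) • 1 = N + c • 1 := by rw [← hN, sub_smul]; abel
    rw [e1, e2, sub_mul, mul_add, mul_add, smul_mul_assoc, mul_smul_comm, one_mul, mul_one,
      smul_mul_assoc, one_mul, smul_smul]
    abel_nf
    rw [pow_two]
  rw [hN, expand, mul_sub, mul_smul_comm, mul_one, ← mul_assoc, hcube]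
  simp

lemma aeval_X_sub_C_matrix {m : Type*} [Fintype m] [DecidableEq m]
    (M : Matrix m m ℝ) (t : ℝ) : Polynomial.aeval M (X - C t) = M - t • 1 := by
  simp [Algebra.algebraMap_eq_smul_one]

lemma fromBlocks_sub' {n m : Type*} {A A' : Matrix n n ℝ} {B B' : Matrix n m ℝ}
    {C C' : Matrix m n ℝ} {D D' : Matrix m m ℝ} :
    fromBlocks A B C D - fromBlocks A' B' C' D'
      = fromBlocks (A - A') (B - B') (C - C') (D - D') := by
  rw [sub_eq_add_neg, fromBlocks_neg, fromBlocks_add]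
  congr 1 <;> rw [sub_eq_add_neg]

lemma phasic_aeval {d : ℕ} (v n : EuclideanSpace ℝ (Fin d)) (ρ c : ℝ) (hρ : ρ ≠ 0)
    (hc : c ≠ 0) (hn : ‖n‖ = 1) (T' : Finset ℝ)
    (h1 : ⟪v, n⟫ ∈ T') (h2 : ⟪v, n⟫ + c ∈ T') (h3 : ⟪v, n⟫ - c ∈ T') :
    Polynomial.aeval (phasicB d v n ρ c) (∏ t ∈ T', (X - C t)) = 0 := by
  classical
  set u := ⟪v, n⟫ with hu
  have hne1 : u ≠ u + c := by intro h; apply hc; linarith [h]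
  have hne2 : u ≠ u - c := by intro h; apply hc; linarith [h]
  have hne3 : u + c ≠ u - c := by intro h; apply hc; linarith [h]
  set tr : Finset ℝ := {u, u + c, u - c} with htr
  have hsub : tr ⊆ T' := by
    intro x hx
    simp only [htr, Finset.mem_insert, Finset.mem_singleton] at hx
    rcases hx with rfl | rfl | rfl <;> assumption
  have hprod : ∏ t ∈ T', (X - C t) = (∏ t ∈ T' \ tr, (X - C t)) * ∏ t ∈ tr, (X - C t) :=
    (Finset.prod_sdiff hsub).symm
  have htrprod : ∏ t ∈ tr, (X - C t)
      = (X - C u) * ((X - C (u + c)) * (X - C (u - c))) := by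
    rw [htr, Finset.prod_insert (by simp [hne1, hne2]),
      Finset.prod_insert (by simp [hne3]), Finset.prod_singleton]
  rw [hprod, htrprod, _root_.map_mul, _root_.map_mul, _root_.map_mul, aeval_X_sub_C_matrix,
    aeval_X_sub_C_matrix, aeval_X_sub_C_matrix, ← mul_assoc]
  rw [mul_assoc _ (phasicB d v n ρ c - u • 1)]
  rw [phasic_cubic v n ρ c hρ hn, mul_zero]

lemma aeval_blockDiagonal {m o : Type*} [Fintype m] [DecidableEq m] [Fintype o] [DecidableEq o]
    (Bf : o → Matrix m m ℝ) (p : ℝ[X]) :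
    Polynomial.aeval (Matrix.blockDiagonal Bf) p
      = Matrix.blockDiagonal fun k => Polynomial.aeval (Bf k) p := by
  induction p using Polynomial.induction_on' with
  | add p q hp hq =>
    have h : (fun k => Polynomial.aeval (Bf k) (p + q))
        = (fun k => Polynomial.aeval (Bf k) p) + fun k => Polynomial.aeval (Bf k) q := by
      funext k; simp
    rw [map_add, hp, hq, ← Matrix.blockDiagonal_add, h]
  | monomial n a =>
    have h : (fun k => Polynomial.aeval (Bf k) (monomial n a)) = fun k => a • Bf k ^ n := by
      funext k
      simp [Polynomial.aeval_monomial, Algebra.algebraMap_eq_smul_one, smul_mul_assoc]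
    rw [h, Polynomial.aeval_monomial, Algebra.algebraMap_eq_smul_one, smul_mul_assoc, one_mul,
      ← Matrix.blockDiagonal_pow, ← Matrix.blockDiagonal_smul]
    rfl

lemma aeval_fromBlocks {q r : Type*} [Fintype q] [DecidableEq q] [Fintype r] [DecidableEq r]
    (V : ℝ) (Cm : Matrix r q ℝ) (Bm : Matrix r r ℝ) (s : Finset ℝ) :
    ∃ Y : Matrix r q ℝ,
      Polynomial.aeval (fromBlocks (V • 1) 0 Cm Bm) (∏ t ∈ s, (X - C t))
        = fromBlocks ((∏ t ∈ s, (V - t)) • (1 : Matrix q q ℝ)) 0 Y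
            (Polynomial.aeval Bm (∏ t ∈ s, (X - C t))) := by
  classical
  induction s using Finset.induction_on with
  | empty => exact ⟨0, by simp [fromBlocks_one]⟩
  | @insert a s ha ih =>
    obtain ⟨Y, hY⟩ := ih
    refine ⟨Cm * ((∏ t ∈ s, (V - t)) • (1 : Matrix q q ℝ)) + (Bm - a • 1) * Y, ?_⟩
    rw [Finset.prod_insert ha, _root_.map_mul, aeval_X_sub_C_matrix, hY]
    have hsub : fromBlocks (V • (1 : Matrix q q ℝ)) 0 Cm Bm - a • 1
        = fromBlocks ((V - a) • 1) 0 Cm (Bm - a • 1) := by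
      rw [show (1 : Matrix (q ⊕ r) (q ⊕ r) ℝ) = fromBlocks 1 0 0 1 from (fromBlocks_one).symm,
        fromBlocks_smul, fromBlocks_sub', sub_smul]
      simp
    rw [hsub, fromBlocks_multiply, Matrix.mul_zero, Matrix.zero_mul, add_zero, Matrix.mul_zero,
      zero_add, smul_mul_assoc, Matrix.one_mul, smul_smul, _root_.map_mul, aeval_X_sub_C_matrix,
      Matrix.zero_mul, zero_add, Finset.prod_insert ha]

end Aux

section Aux2
open Polynomial Matrix
lemma bn_annihilated (d K : ℕ) (hK : 1 ≤ K)
    (n : EuclideanSpace ℝ (Fin d)) (hn : ‖n‖ = 1) (V : ℝ)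
    (v : Fin K → EuclideanSpace ℝ (Fin d)) (ρ c : Fin K → ℝ)
    (hρ : ∀ k, ρ k ≠ 0) (hc : ∀ k, c k ≠ 0)
    (A : Fin K → Matrix (Fin d ⊕ Unit) (Fin (K - 1)) ℝ)
    (hres₀ : ∀ k, V ≠ ⟪v k, n⟫)
    (hresP : ∀ k, V ≠ ⟪v k, n⟫ + c k)
    (hresM : ∀ k, V ≠ ⟪v k, n⟫ - c k) :
    ∃ T : Finset ℝ,
      Polynomial.aeval (bnMatrix d K n V v ρ c A) (∏ t ∈ T, (X - C t)) = 0 := by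
  classical
  set T' : Finset ℝ :=
    Finset.univ.biUnion fun k => {⟪v k, n⟫, ⟪v k, n⟫ + c k, ⟪v k, n⟫ - c k} with hT'
  have hV : V ∉ T' := by
    simp only [hT', Finset.mem_biUnion, Finset.mem_insert, Finset.mem_singleton]
    rintro ⟨k, -, (h | h | h)⟩
    · exact hres₀ k h
    · exact hresP k h
    · exact hresM k h
  set Bm : Matrix ((Fin d ⊕ Unit) × Fin K) ((Fin d ⊕ Unit) × Fin K) ℝ :=
    Matrix.blockDiagonal fun k => phasicB d (v k) n (ρ k) (c k) with hBmdef
  set Cm : Matrix ((Fin d ⊕ Unit) × Fin K) (Fin (K - 1)) ℝ :=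
    Matrix.of fun p j => A p.2 p.1 j with hCmdef
  have hM : bnMatrix d K n V v ρ c A = fromBlocks (V • 1) 0 Cm Bm := rfl
  have hBm : Polynomial.aeval Bm (∏ t ∈ T', (X - C t)) = 0 := by
    rw [hBmdef, aeval_blockDiagonal]
    have h0 : (fun k => Polynomial.aeval (phasicB d (v k) n (ρ k) (c k)) (∏ t ∈ T', (X - C t)))
        = fun _ => (0 : Matrix (Fin d ⊕ Unit) (Fin d ⊕ Unit) ℝ) := by
      funext k
      refine phasic_aeval (v k) n (ρ k) (c k) (hρ k) (hc k) hn T' ?_ ?_ ?_ <;>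
        · rw [hT']
          refine Finset.mem_biUnion.mpr ⟨k, Finset.mem_univ k, by simp⟩
    rw [h0]; exact Matrix.blockDiagonal_zero
  obtain ⟨Y, hY⟩ := aeval_fromBlocks V Cm Bm T'
  refine ⟨insert V T', ?_⟩
  have hMsub : (fromBlocks (V • (1 : Matrix (Fin (K - 1)) (Fin (K - 1)) ℝ)) 0 Cm Bm) - V • 1
      = fromBlocks 0 0 Cm (Bm - V • 1) := by
    rw [show (1 : Matrix ((Fin (K - 1)) ⊕ ((Fin d ⊕ Unit) × Fin K))
        ((Fin (K - 1)) ⊕ ((Fin d ⊕ Unit) × Fin K)) ℝ) = fromBlocks 1 0 0 1 from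
      (fromBlocks_one).symm, fromBlocks_smul, fromBlocks_sub']
    simp
  rw [Finset.prod_insert hV, mul_comm, _root_.map_mul, hM, hY, hBm, aeval_X_sub_C_matrix,
    hMsub, fromBlocks_multiply]
  simp

end Aux2

/-- Hyperbolicity: under the non-resonance condition `V ≠ v_k·n` and `V ≠ v_k·n ± c_k`,
the Baer–Nunziato coefficient matrix is diagonalizable over `ℝ`. -/
theorem bnMatrix_diagonalizable (d K : ℕ) (hd : 1 ≤ d) (hK : 1 ≤ K)
    (n : EuclideanSpace ℝ (Fin d)) (hn : ‖n‖ = 1) (V : ℝ)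
    (v : Fin K → EuclideanSpace ℝ (Fin d)) (ρ c : Fin K → ℝ)
    (hρ : ∀ k, ρ k ≠ 0) (hc : ∀ k, c k ≠ 0)
    (A : Fin K → Matrix (Fin d ⊕ Unit) (Fin (K - 1)) ℝ)
    (hres₀ : ∀ k, V ≠ ⟪v k, n⟫)
    (hresP : ∀ k, V ≠ ⟪v k, n⟫ + c k)
    (hresM : ∀ k, V ≠ ⟪v k, n⟫ - c k) :
    ∃ (S : Matrix (Fin (K - 1) ⊕ ((Fin d ⊕ Unit) × Fin K))
          (Fin (K - 1) ⊕ ((Fin d ⊕ Unit) × Fin K)) ℝ)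
      (D : Fin (K - 1) ⊕ ((Fin d ⊕ Unit) × Fin K) → ℝ),
      IsUnit S.det ∧ bnMatrix d K n V v ρ c A = S * Matrix.diagonal D * S⁻¹ := by
  classical
  have key := bn_annihilated d K hK n hn V v ρ c hρ hc A hres₀ hresP hresM
  obtain ⟨T, hT⟩ := key
  exact matrix_diag_of_aeval _ T hT
end

section
/- Let d ≥ 1, let n ∈ ℝ^d with ‖n‖ = 1, let v ∈ ℝ^d, ρ ≠ 0, c ∈ ℝ, V ∈ ℝ, and set δ := v·n − V and σ := δ² − c². Assume δ ≠ 0 and σ ≠ 0. Then the matrix B(v,ρ,c,n) − V·I_{d+1} is invertible, and its inverse is the (d+1)×(d+1) matrix whose top-left d×d block is δ⁻¹·I_d + c²·(δσ)⁻¹·(n⊗n), whose top-right d×1 block is −(ρσ)⁻¹·n, whose bottom-left 1×d block is −ρc²σ⁻¹·nᵀ, and whose bottom-right entry is δ·σ⁻¹. -/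
open scoped RealInnerProductSpace

/-- Explicit inverse of `B(v,ρ,c,n) − V·I`: with drift `δ := v·n − V` and `σ := δ² − c²`
both nonzero, the matrix `B − V·I` is invertible, with inverse having top-left block
`δ⁻¹I + c²(δσ)⁻¹ n⊗n`, top-right block `−(ρσ)⁻¹ n`, bottom-left block `−ρc²σ⁻¹ nᵀ` and
bottom-right entry `δσ⁻¹`. -/
theorem phasicB_sub_smul_inv (d : ℕ) (hd : 1 ≤ d) (n : EuclideanSpace ℝ (Fin d))
    (hn : ‖n‖ = 1) (v : EuclideanSpace ℝ (Fin d)) (ρ : ℝ) (hρ : ρ ≠ 0) (c : ℝ)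
    (V δ σ : ℝ) (hδdef : δ = ⟪v, n⟫ - V) (hσdef : σ = δ ^ 2 - c ^ 2)
    (hδ : δ ≠ 0) (hσ : σ ≠ 0) :
    (phasicB d v n ρ c - V • (1 : Matrix (Fin d ⊕ Unit) (Fin d ⊕ Unit) ℝ)) *
        Matrix.fromBlocks
          (δ⁻¹ • (1 : Matrix (Fin d) (Fin d) ℝ)
            + (c ^ 2 * (δ * σ)⁻¹) • Matrix.vecMulVec (fun i => n i) (fun j => n j))
          (Matrix.of fun i _ => -(ρ * σ)⁻¹ * n i)
          (Matrix.of fun _ j => -(ρ * c ^ 2) * σ⁻¹ * n j)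
          ((δ * σ⁻¹) • (1 : Matrix Unit Unit ℝ))
      = 1 ∧
    Matrix.fromBlocks
          (δ⁻¹ • (1 : Matrix (Fin d) (Fin d) ℝ)
            + (c ^ 2 * (δ * σ)⁻¹) • Matrix.vecMulVec (fun i => n i) (fun j => n j))
          (Matrix.of fun i _ => -(ρ * σ)⁻¹ * n i)
          (Matrix.of fun _ j => -(ρ * c ^ 2) * σ⁻¹ * n j)
          ((δ * σ⁻¹) • (1 : Matrix Unit Unit ℝ)) *
        (phasicB d v n ρ c - V • (1 : Matrix (Fin d ⊕ Unit) (Fin d ⊕ Unit) ℝ))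
      = 1 := by
  have h1 : ∑ i, n i * n i = 1 := by
    have h := real_inner_self_eq_norm_sq n
    rw [hn] at h
    simpa only [PiLp.inner_apply, RCLike.inner_apply, conj_trivial, one_pow] using h
  have hB : phasicB d v n ρ c - V • (1 : Matrix (Fin d ⊕ Unit) (Fin d ⊕ Unit) ℝ)
      = Matrix.fromBlocks (δ • (1 : Matrix (Fin d) (Fin d) ℝ))
          (Matrix.of fun i _ => ρ⁻¹ * n i)
          (Matrix.of fun _ j => ρ * c ^ 2 * n j)
          (δ • (1 : Matrix Unit Unit ℝ)) := by
    rw [phasicB, ← Matrix.fromBlocks_one, Matrix.fromBlocks_smul]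
    ext (i|i) (j|j) <;>
      simp [Matrix.fromBlocks, hδdef, sub_smul, Matrix.sub_apply, Matrix.smul_apply]
  have key : ∀ (f : Fin d → ℝ) (a : ℝ), (∀ x, f x = n x * n x * a) → ∑ x, f x = a := by
    intro f a hf
    rw [Finset.sum_congr rfl fun x _ => hf x, ← Finset.sum_mul, h1, one_mul]
  rw [hB, Matrix.fromBlocks_multiply, Matrix.fromBlocks_multiply, ← Matrix.fromBlocks_one]
  constructor
  · ext (i|i) (j|j) <;>
      simp only [Matrix.fromBlocks, Matrix.mul_apply, Matrix.one_apply, Matrix.add_apply,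
        Matrix.smul_apply, Matrix.of_apply, Matrix.vecMulVec_apply, Sum.elim_inl, Sum.elim_inr,
        Matrix.zero_apply, smul_eq_mul, mul_ite, ite_mul, mul_zero, zero_mul, mul_add, add_mul,
        Finset.sum_add_distrib, Finset.sum_ite_eq, Finset.sum_ite_eq', Finset.mem_univ, if_true,
        Finset.sum_const, Finset.card_univ, Fintype.card_unit, one_smul, mul_one, neg_mul]
    · split <;> field_simp <;> ring
    · ring
    · rw [key (fun x => ρ * c ^ 2 * n x * (c ^ 2 * (δ * σ)⁻¹ * (n x * n j)))
        (ρ * c ^ 2 * (c ^ 2 * (δ * σ)⁻¹) * n j) fun x => by ring]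
      field_simp
      linear_combination (ρ * c ^ 2 * n j) * hσdef
    · rw [key (fun x => ρ * c ^ 2 * n x * -((ρ * σ)⁻¹ * n x)) (-(ρ * c ^ 2 * (ρ * σ)⁻¹)) fun x => by ring]
      rw [hσdef]
      have hσ' : δ ^ 2 - c ^ 2 ≠ 0 := by rw [← hσdef]; exact hσ
      field_simp
      ring
  · ext (i|i) (j|j) <;>
      simp only [Matrix.fromBlocks, Matrix.mul_apply, Matrix.one_apply, Matrix.add_apply,
        Matrix.smul_apply, Matrix.of_apply, Matrix.vecMulVec_apply, Sum.elim_inl, Sum.elim_inr,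
        Matrix.zero_apply, smul_eq_mul, mul_ite, ite_mul, mul_zero, zero_mul, mul_add, add_mul,
        Finset.sum_add_distrib, Finset.sum_ite_eq, Finset.sum_ite_eq', Finset.mem_univ, if_true,
        Finset.sum_const, Finset.card_univ, Fintype.card_unit, one_smul, mul_one, neg_mul]
    · split <;> field_simp <;> ring
    · rw [key (fun x => c ^ 2 * (δ * σ)⁻¹ * (n i * n x) * (ρ⁻¹ * n x))
        (c ^ 2 * (δ * σ)⁻¹ * n i * ρ⁻¹) fun x => by ring]
      field_simp
      linear_combination (n i) * hσdef
    · ring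
    · rw [key (fun x => -(ρ * c ^ 2 * σ⁻¹ * n x * (ρ⁻¹ * n x))) (-(ρ * c ^ 2 * σ⁻¹ * ρ⁻¹)) fun x => by ring]
      rw [hσdef]
      have hσ' : δ ^ 2 - c ^ 2 ≠ 0 := by rw [← hσdef]; exact hσ
      field_simp
      ring
end

section
/- Let d ≥ 1, let n ∈ ℝ^d with ‖n‖ = 1, let v ∈ ℝ^d, ρ ≠ 0, c ≠ 0, and let B = B(v,ρ,c,n) be the phasic coefficient matrix. Define the (d+1)×(d+1) matrix P whose top-left d×d block is (ρ²/(2c²))·(n⊗n) + (I_d − n⊗n), whose off-diagonal blocks are zero, and whose bottom-right entry is 1/(2c⁴). Then P is symmetric and positive definite, and the product P·B is a symmetric matrix. That is, P is a symmetrizer of the phasic subsystem. -/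
open scoped RealInnerProductSpace
open Matrix

/-- The symmetrizer of the phasic subsystem: the block-diagonal matrix `P` with
top-left block `(ρ²/(2c²)) n⊗n + (I_d − n⊗n)` and bottom-right entry `1/(2c⁴)`. -/
noncomputable def phasicP (d : ℕ) (n : EuclideanSpace ℝ (Fin d)) (ρ c : ℝ) :
    Matrix (Fin d ⊕ Unit) (Fin d ⊕ Unit) ℝ :=
  Matrix.fromBlocks
    ((ρ ^ 2 / (2 * c ^ 2)) • Matrix.vecMulVec (fun i => n i) (fun j => n j)
      + ((1 : Matrix (Fin d) (Fin d) ℝ) - Matrix.vecMulVec (fun i => n i) (fun j => n j)))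
    0 0
    ((1 / (2 * c ^ 4)) • (1 : Matrix Unit Unit ℝ))

/-- `P` is a symmetrizer of the phasic coefficient matrix `B(v,ρ,c,n)`:
`P` is symmetric and positive definite, and `P·B` is symmetric. -/
theorem phasicP_symmetrizer (d : ℕ) (hd : 1 ≤ d) (n : EuclideanSpace ℝ (Fin d))
    (hn : ‖n‖ = 1) (v : EuclideanSpace ℝ (Fin d)) (ρ : ℝ) (hρ : ρ ≠ 0)
    (c : ℝ) (hc : c ≠ 0) :
    (phasicP d n ρ c).IsSymm ∧ (phasicP d n ρ c).PosDef ∧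
      (phasicP d n ρ c * phasicB d v n ρ c).IsSymm := by
  have hsum : ∑ i, n i * n i = 1 := by
    have := real_inner_self_eq_norm_sq n
    rw [hn, one_pow] at this
    simp only [PiLp.inner_apply, RCLike.inner_apply, conj_trivial] at this
    simpa using this
  have hsymm : (phasicP d n ρ c).IsSymm := by
    ext i j
    rcases i with i | i <;> rcases j with j | j <;>
      simp [phasicP, Matrix.transpose_apply, Matrix.one_apply, Matrix.vecMulVec_apply,
        mul_comm] <;>
      first
      | rfl
      | (rcases eq_or_ne i j with rfl | h
         · simp
         · simp [h, Ne.symm h])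
  refine ⟨hsymm, Matrix.posDef_iff_dotProduct_mulVec.mpr ⟨?_, ?_⟩, ?_⟩
  · -- Hermitian
    rw [Matrix.IsHermitian, Matrix.conjTranspose_eq_transpose_of_trivial]
    exact hsymm
  · -- positivity of quadratic form
    intro x hx
    have key : ∀ i, (phasicP d n ρ c *ᵥ x) (Sum.inl i) =
        ρ^2/(2*c^2) * (n i * ∑ k, n k * x (Sum.inl k)) + x (Sum.inl i)
          - n i * ∑ k, n k * x (Sum.inl k) := by
      intro i
      simp [phasicP, Matrix.mulVec, dotProduct, Fintype.sum_sum_type,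
        Matrix.one_apply, Matrix.vecMulVec_apply, add_mul, sub_mul, mul_assoc,
        Finset.sum_add_distrib, Finset.sum_sub_distrib, Finset.mul_sum, ite_mul,
        Finset.sum_ite_eq]
      ring
    have key2 : (phasicP d n ρ c *ᵥ x) (Sum.inr ()) = 1/(2*c^4) * x (Sum.inr ()) := by
      simp [phasicP, Matrix.mulVec, dotProduct, Fintype.sum_sum_type]
    set y : EuclideanSpace ℝ (Fin d) := WithLp.toLp 2 (fun i => x (Sum.inl i)) with hy
    set s : ℝ := ∑ k, n k * x (Sum.inl k) with hs
    set t : ℝ := x (Sum.inr ()) with ht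
    set q : ℝ := ∑ k, x (Sum.inl k) * x (Sum.inl k) with hq
    have hform : dotProduct (star x) (phasicP d n ρ c *ᵥ x)
        = ρ^2/(2*c^2) * (s * s) + (q - s * s) + 1/(2*c^4) * (t * t) := by
      simp only [star_trivial, dotProduct, Fintype.sum_sum_type, key, key2,
        Finset.univ_unique, Finset.sum_singleton]
      have expand : ∀ i : Fin d,
          x (Sum.inl i) * (ρ^2/(2*c^2) * (n i * s) + x (Sum.inl i) - n i * s)
            = ρ^2/(2*c^2) * s * (n i * x (Sum.inl i))
              + x (Sum.inl i) * x (Sum.inl i) - s * (n i * x (Sum.inl i)) := fun i => by ring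
      rw [Finset.sum_congr rfl (fun i _ => expand i), Finset.sum_sub_distrib,
        Finset.sum_add_distrib, ← Finset.mul_sum, ← Finset.mul_sum, ← hs, ← hq]
      ring
    rw [hform]
    have hCS : s * s ≤ q := by
      have h1 : ⟪n, y⟫ * ⟪n, y⟫ ≤ ⟪n, n⟫ * ⟪y, y⟫ := real_inner_mul_inner_self_le n y
      have h2 : ⟪n, y⟫ = s := by simp [PiLp.inner_apply, RCLike.inner_apply, hy, hs, mul_comm]
      have h3 : ⟪n, n⟫ = (1:ℝ) := by
        simp only [PiLp.inner_apply, RCLike.inner_apply, conj_trivial]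
        simpa using hsum
      have h4 : ⟪y, y⟫ = q := by
        rw [hy, hq, PiLp.inner_apply]
        simp only [PiLp.toLp_apply, RCLike.inner_apply, conj_trivial]
      rw [h2, h3, h4, one_mul] at h1
      exact h1
    have hA : (0:ℝ) ≤ ρ^2/(2*c^2) * (s*s) :=
      mul_nonneg (div_nonneg (sq_nonneg ρ) (by positivity)) (mul_self_nonneg s)
    have hB : (0:ℝ) ≤ 1/(2*c^4) * (t*t) :=
      mul_nonneg (by positivity) (mul_self_nonneg t)
    by_cases htz : t = 0
    · obtain ⟨j, hj⟩ := Function.ne_iff.mp hx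
      rcases j with i | u
      · have hqpos : 0 < q := by
          refine Finset.sum_pos' (fun k _ => mul_self_nonneg _)
            ⟨i, Finset.mem_univ i, mul_self_pos.mpr hj⟩
        by_cases hsz : s = 0
        · have hzz : s * s = 0 := by rw [hsz]; ring
          linarith
        · have hApos : (0:ℝ) < ρ^2/(2*c^2) * (s*s) :=
            mul_pos (div_pos (by positivity) (by positivity)) (mul_self_pos.mpr hsz)
          linarith
      · cases u; exact absurd htz hj
    · have hBpos : (0:ℝ) < 1/(2*c^4) * (t*t) :=
        mul_pos (by positivity) (mul_self_pos.mpr htz)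
      linarith
  · -- P * B symmetric
    ext i j
    rcases i with i | i <;> rcases j with j | j <;>
      simp [phasicP, phasicB, Matrix.mul_apply, Fintype.sum_sum_type, Matrix.transpose_apply,
        Matrix.one_apply, Matrix.vecMulVec_apply, Finset.sum_ite_eq, mul_comm, hsum,
        add_mul, sub_mul, mul_assoc, Finset.sum_add_distrib, Finset.sum_sub_distrib,
        Finset.mul_sum, ite_mul]
    · rcases eq_or_ne i j with rfl | h
      · ring
      · simp only [h, Ne.symm h, if_false]
        ring
    · have expand : ∀ k, ρ⁻¹ * (n k * (ρ^2/(c^2*2) * (n i * n k)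
          + ((if i = k then (1:ℝ) else 0) - n i * n k)))
          = (ρ^2/(c^2*2)) * ρ⁻¹ * n i * (n k * n k)
            + (if i = k then ρ⁻¹ * n k else 0) - ρ⁻¹ * n i * (n k * n k) := by
        intro k
        rcases eq_or_ne i k with rfl | h
        · simp; ring
        · simp [h]; ring
      rw [Finset.sum_congr rfl (fun k _ => expand k), Finset.sum_sub_distrib,
        Finset.sum_add_distrib, Finset.sum_ite_eq, ← Finset.mul_sum, ← Finset.mul_sum, hsum]
      simp
      field_simp
    · have expand : ∀ k, ρ⁻¹ * (n k * (ρ^2/(c^2*2) * (n j * n k)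
          + ((if j = k then (1:ℝ) else 0) - n j * n k)))
          = (ρ^2/(c^2*2)) * ρ⁻¹ * n j * (n k * n k)
            + (if j = k then ρ⁻¹ * n k else 0) - ρ⁻¹ * n j * (n k * n k) := by
        intro k
        rcases eq_or_ne j k with rfl | h
        · simp; ring
        · simp [h]; ring
      rw [Finset.sum_congr rfl (fun k _ => expand k), Finset.sum_sub_distrib,
        Finset.sum_add_distrib, Finset.sum_ite_eq, ← Finset.mul_sum, ← Finset.mul_sum, hsum]
      simp
      field_simp
end

section
/- Let r ≥ 1 and m ≥ 1, let V ∈ ℝ, let A be a real m×r matrix, and let B be a real m×m matrix that is diagonalizable over ℝ (i.e., B = R·Λ·R⁻¹ for some invertible real R and real diagonal Λ). Assume V is not an eigenvalue of B. Then the block lower-triangular matrix M of size r+m with top-left block V·I_r, top-right block 0, bottom-left block A and bottom-right block B admits a symmetrizer: there exists a symmetric positive definite real matrix P of size r+m such that P·M is symmetric. -/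
open Matrix

/-- A real matrix of the form `Nᵀ * N` with `N` invertible is positive definite. -/
lemma posDef_transpose_mul_self_of_isUnit {n : Type*} [Fintype n] [DecidableEq n]
    (N : Matrix n n ℝ) (hN : IsUnit N.det) : (Nᵀ * N).PosDef := by
  have hsemi : (Nᵀ * N).PosSemidef := by
    simpa using Matrix.posSemidef_conjTranspose_mul_self N
  refine ⟨hsemi.1, fun x hx => ?_⟩
  rcases lt_or_eq_of_le (hsemi.2 x) with h | h
  · simpa using h
  · exfalso
    have h0 : (Nᵀ * N) *ᵥ x = 0 := by
      have := (hsemi.dotProduct_mulVec_zero_iff x).mp (by simpa [dotProduct, mulVec, Finsupp.sum_fintype, Finset.mul_sum, mul_assoc] using h.symm)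
      simpa using this
    have hU : IsUnit (Nᵀ * N).det := by
      rw [Matrix.det_mul, Matrix.det_transpose]; exact hN.mul hN
    have : x = 0 := by
      have := congrArg (fun v => (Nᵀ * N)⁻¹ *ᵥ v) h0
      simpa [Matrix.mulVec_mulVec, Matrix.nonsing_inv_mul _ hU] using this
    exact hx this

/-- Abstract symmetrization theorem for the quasi-1D barotropic Baer–Nunziato system:
if `B` is diagonalizable over `ℝ` and `V` is not an eigenvalue of `B`, then the block
lower-triangular matrix `M = [[V·I_r, 0], [A, B]]` admits a symmetrizer, i.e. a
symmetric positive definite matrix `P` such that `P·M` is symmetric. -/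
theorem blockTriangular_symmetrizer (r m : ℕ) (hr : 1 ≤ r) (hm : 1 ≤ m) (V : ℝ)
    (A : Matrix (Fin m) (Fin r) ℝ) (B : Matrix (Fin m) (Fin m) ℝ)
    (hdiag : ∃ (R : Matrix (Fin m) (Fin m) ℝ) (Λ : Fin m → ℝ),
      IsUnit R.det ∧ B = R * Matrix.diagonal Λ * R⁻¹)
    (hV : ∀ x : Fin m → ℝ, B.mulVec x = V • x → x = 0) :
    ∃ P : Matrix (Fin r ⊕ Fin m) (Fin r ⊕ Fin m) ℝ,
      P.IsSymm ∧ P.PosDef ∧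
        (P * Matrix.fromBlocks (V • (1 : Matrix (Fin r) (Fin r) ℝ)) 0 A B).IsSymm := by
  obtain ⟨R, Λ, hR, hB⟩ := hdiag
  -- the matrix `C = V•1 - B` is invertible
  set C : Matrix (Fin m) (Fin m) ℝ := V • (1 : Matrix (Fin m) (Fin m) ℝ) - B with hC
  have hCunit : IsUnit C.det := by
    rw [← Matrix.isUnit_iff_isUnit_det, ← Matrix.mulVec_injective_iff_isUnit]
    intro x y hxy
    have h0 : C *ᵥ (x - y) = 0 := by
      rw [Matrix.mulVec_sub, hxy, sub_self]
    have hx' : V • (x - y) - B *ᵥ (x - y) = 0 := by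
      simpa [hC, Matrix.sub_mulVec, Matrix.smul_mulVec] using h0
    have := hV (x - y) (sub_eq_zero.mp hx').symm
    exact sub_eq_zero.mp this
  -- the change-of-basis matrix `S` diagonalizing `M`
  set X : Matrix (Fin m) (Fin r) ℝ := C⁻¹ * A with hX
  set S : Matrix (Fin r ⊕ Fin m) (Fin r ⊕ Fin m) ℝ := Matrix.fromBlocks 1 0 X R with hS
  set D : Matrix (Fin r ⊕ Fin m) (Fin r ⊕ Fin m) ℝ :=
    Matrix.fromBlocks (V • (1 : Matrix (Fin r) (Fin r) ℝ)) 0 0 (Matrix.diagonal Λ) with hD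
  set M : Matrix (Fin r ⊕ Fin m) (Fin r ⊕ Fin m) ℝ :=
    Matrix.fromBlocks (V • (1 : Matrix (Fin r) (Fin r) ℝ)) 0 A B with hM
  have hSunit : IsUnit S.det := by
    rw [hS, Matrix.det_fromBlocks_zero₁₂, Matrix.det_one, one_mul]
    exact hR
  -- key identity: M * S = S * D
  have hMS : M * S = S * D := by
    have hBR : B * R = R * Matrix.diagonal Λ := by
      rw [hB, Matrix.mul_assoc, Matrix.nonsing_inv_mul _ hR, Matrix.mul_one]
    have hCX : C * X = A := by
      rw [hX, ← Matrix.mul_assoc, Matrix.mul_nonsing_inv _ hCunit, Matrix.one_mul]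
    have hAX : A + B * X = X * (V • (1 : Matrix (Fin r) (Fin r) ℝ)) := by
      have : (V • (1 : Matrix (Fin m) (Fin m) ℝ)) * X - B * X = A := by
        rw [← Matrix.sub_mul]; exact hCX
      rw [Matrix.mul_smul, Matrix.mul_one, ← this, Matrix.smul_mul, Matrix.one_mul]
      abel
    rw [hM, hS, hD, Matrix.fromBlocks_multiply, Matrix.fromBlocks_multiply]
    congr 1 <;> simp [hBR, hAX]
  -- the symmetrizer
  refine ⟨S⁻¹ᵀ * S⁻¹, ?_, ?_, ?_⟩
  · unfold Matrix.IsSymm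
    rw [Matrix.transpose_mul, Matrix.transpose_transpose]
  · exact posDef_transpose_mul_self_of_isUnit _ (S.isUnit_nonsing_inv_det hSunit)
  · have hMeq : M = S * D * S⁻¹ := by
      rw [← hMS, Matrix.mul_assoc, Matrix.mul_nonsing_inv _ hSunit, Matrix.mul_one]
    have : S⁻¹ᵀ * S⁻¹ * M = S⁻¹ᵀ * (D * S⁻¹) := by
      rw [hMeq, Matrix.mul_assoc]
      congr 1
      rw [← Matrix.mul_assoc, ← Matrix.mul_assoc, Matrix.nonsing_inv_mul _ hSunit,
        Matrix.one_mul]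
    rw [show (S⁻¹ᵀ * S⁻¹ * Matrix.fromBlocks (V • (1 : Matrix (Fin r) (Fin r) ℝ)) 0 A B)
        = S⁻¹ᵀ * (D * S⁻¹) from this]
    unfold Matrix.IsSymm
    rw [Matrix.transpose_mul, Matrix.transpose_mul, Matrix.transpose_transpose,
      ← Matrix.mul_assoc]
    congr 1
    congr 1
    rw [hD]
    rw [Matrix.fromBlocks_transpose]
    simp [Matrix.transpose_smul, Matrix.diagonal_transpose]
end

section
/- Let d ≥ 1 and K ≥ 2, let p_1,…,p_K ∈ ℝ, and let β_1,…,β_K ∈ [0,1] with Σ_{k=1}^K β_k = 1. Define the interfacial pressures P_{k,l} := β_k·p_l + (1 − β_k)·p_k for k ≠ l. Then: (a) for every l ∈ {1,…,K}, Σ_{k≠l} P_{k,l} = Σ_{k=1}^K (1 − β_k)·p_k; in particular this sum is independent of l (conservation constraint), and the common value P_I = Σ_k (1−β_k)p_k is positive whenever all p_k > 0. (b) For all velocities v_1,…,v_K ∈ ℝ^d, setting V := Σ_{k=1}^K β_k·v_k, and for all vectors g_1,…,g_K ∈ ℝ^d with Σ_{l=1}^K g_l = 0, the interfacial entropy production vanishes: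 Σ_{k=1}^K Σ_{l≠k} (P_{k,l} − p_k)·((V − v_k)·g_l) = 0. (c) Uniqueness: if Q_{k,l} (k ≠ l) are real numbers such that Σ_{k≠l} Q_{k,l} is independent of l and such that Σ_{k=1}^K Σ_{l≠k} (Q_{k,l} − p_k)·((V − v_k)·g_l) = 0 holds for ALL choices of v_1,…,v_K ∈ ℝ^d and all g_1,…,g_K with Σ_l g_l = 0, then Q_{k,l} = P_{k,l} for all k ≠ l. -/
open scoped RealInnerProductSpace
open Finset

/-- Entropy production due to interfacial states: with interfacial velocity
`V = Σ β_k v_k` (a convex combination of the phasic velocities), the interfacial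
pressures `P_{k,l} = β_k p_l + (1 − β_k) p_k` (a) satisfy the conservation constraint
`Σ_{k≠l} P_{k,l} = Σ_k (1−β_k) p_k` for every `l` (a positive quantity when all `p_k > 0`),
(b) make the interfacial entropy production vanish for all velocities and all zero-sum
families `g_l`, and (c) are the unique such interfacial pressures. -/
theorem interfacial_pressures_unique (d K : ℕ) (hd : 1 ≤ d) (hK : 2 ≤ K)
    (p β : Fin K → ℝ) (hβ : ∀ k, β k ∈ Set.Icc (0 : ℝ) 1) (hβsum : ∑ k, β k = 1) :
    (∀ l : Fin K, ∑ k ∈ univ.erase l, (β k * p l + (1 - β k) * p k)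
        = ∑ k, (1 - β k) * p k) ∧
    ((∀ k, 0 < p k) → 0 < ∑ k, (1 - β k) * p k) ∧
    (∀ (v g : Fin K → EuclideanSpace ℝ (Fin d)), ∑ l, g l = 0 →
      ∑ k, ∑ l ∈ univ.erase k,
          ((β k * p l + (1 - β k) * p k) - p k) * ⟪(∑ j, β j • v j) - v k, g l⟫ = 0) ∧
    (∀ Q : Fin K → Fin K → ℝ,
      (∀ l l' : Fin K, ∑ k ∈ univ.erase l, Q k l = ∑ k ∈ univ.erase l', Q k l') →
      (∀ (v g : Fin K → EuclideanSpace ℝ (Fin d)), ∑ l, g l = 0 →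
        ∑ k, ∑ l ∈ univ.erase k,
            (Q k l - p k) * ⟪(∑ j, β j • v j) - v k, g l⟫ = 0) →
      ∀ k l, k ≠ l → Q k l = β k * p l + (1 - β k) * p k) := by
  refine ⟨?_, ?_, ?_, ?_⟩
  · -- (a)
    intro l
    have h1 : ∑ k ∈ univ.erase l, β k = 1 - β l := by
      rw [sum_erase_eq_sub (mem_univ l), hβsum]
    rw [sum_add_distrib, ← sum_mul, h1, sum_erase_eq_sub (mem_univ l)]
    ring
  · -- positivity
    intro hp
    have hne : ∃ k : Fin K, 0 < 1 - β k := by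
      by_contra h
      push_neg at h
      have h1 : ∑ k : Fin K, (1 - β k) ≤ 0 := sum_nonpos (fun i _ => h i)
      have h2 : ∑ k : Fin K, (1 - β k) = (K : ℝ) - 1 := by
        rw [sum_sub_distrib, hβsum]; simp
      have h3 : (2:ℝ) ≤ (K:ℝ) := by exact_mod_cast hK
      rw [h2] at h1; linarith
    obtain ⟨k0, hk0⟩ := hne
    apply sum_pos'
    · intro i _; exact mul_nonneg (by linarith [(hβ i).2]) (hp i).le
    · exact ⟨k0, mem_univ _, mul_pos hk0 (hp k0)⟩
  · -- (b) vanishing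
    intro v g hg
    set V := ∑ j, β j • v j with hV
    have hzero : ∑ k, β k • (V - v k) = 0 := by
      have : ∑ k, β k • (V - v k) = (∑ k, β k) • V - ∑ k, β k • v k := by
        rw [sum_smul, ← sum_sub_distrib]
        exact Finset.sum_congr rfl fun k _ => smul_sub _ _ _
      rw [this, hβsum, one_smul, ← hV, sub_self]
    have step : ∀ k : Fin K, ∑ l ∈ univ.erase k,
        ((β k * p l + (1 - β k) * p k) - p k) * ⟪V - v k, g l⟫
        = ∑ l, (p l * (β k * ⟪V - v k, g l⟫) - (β k * p k) * ⟪V - v k, g l⟫) := by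
      intro k
      have : ∑ l ∈ univ.erase k,
          ((β k * p l + (1 - β k) * p k) - p k) * ⟪V - v k, g l⟫
          = ∑ l, ((β k * p l + (1 - β k) * p k) - p k) * ⟪V - v k, g l⟫ := by
        rw [sum_erase_eq_sub (mem_univ k)]
        have : ((β k * p k + (1 - β k) * p k) - p k) = 0 := by ring
        rw [this, zero_mul, sub_zero]
      rw [this]
      exact Finset.sum_congr rfl fun l _ => by ring
    calc ∑ k, ∑ l ∈ univ.erase k,
          ((β k * p l + (1 - β k) * p k) - p k) * ⟪V - v k, g l⟫
        = ∑ k, ∑ l, (p l * (β k * ⟪V - v k, g l⟫) - (β k * p k) * ⟪V - v k, g l⟫) := by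
          exact Finset.sum_congr rfl fun k _ => step k
      _ = (∑ k, ∑ l, p l * (β k * ⟪V - v k, g l⟫))
            - ∑ k, (β k * p k) * ∑ l, ⟪V - v k, g l⟫ := by
          rw [← sum_sub_distrib]
          refine Finset.sum_congr rfl fun k _ => ?_
          rw [sum_sub_distrib, Finset.mul_sum]
      _ = 0 := by
          have hA : ∑ k, ∑ l, p l * (β k * ⟪V - v k, g l⟫) = 0 := by
            rw [Finset.sum_comm]
            refine Finset.sum_eq_zero fun l _ => ?_
            rw [← mul_sum]
            have : ∑ k, β k * ⟪V - v k, g l⟫ = ⟪∑ k, β k • (V - v k), g l⟫ := by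
              rw [sum_inner]
              exact Finset.sum_congr rfl fun k _ => (real_inner_smul_left _ _ _).symm
            rw [this, hzero, inner_zero_left, mul_zero]
          have hB : ∀ k : Fin K, ∑ l, ⟪V - v k, g l⟫ = 0 := by
            intro k
            rw [← inner_sum, hg, inner_zero_right]
          rw [hA]
          simp only [hB, mul_zero, Finset.sum_const_zero, sub_zero, zero_sub, neg_zero]
  · -- (c) uniqueness
    intro Q hQconst hQzero k l hkl
    set i0 : Fin d := ⟨0, hd⟩ with hi0
    set e : EuclideanSpace ℝ (Fin d) := EuclideanSpace.single i0 (1:ℝ) with he_def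
    have he : ⟪e, e⟫ = 1 := by
      simp [he_def, EuclideanSpace.inner_single_left]
    set v : Fin K → EuclideanSpace ℝ (Fin d) := fun j => if j = k then e else 0 with hv
    set g : Fin K → EuclideanSpace ℝ (Fin d) :=
      fun m => (if m = l then e else 0) - (if m = k then e else 0) with hgdef
    have hg : ∑ m, g m = 0 := by
      simp only [hgdef]
      rw [sum_sub_distrib]
      simp [Finset.sum_ite_eq']
    have hVe : (∑ j, β j • v j) = β k • e := by
      simp only [hv, smul_ite, smul_zero]
      rw [Finset.sum_ite_eq']
      simp
    have hinner : ∀ k' m : Fin K, ⟪(∑ j, β j • v j) - v k', g m⟫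
        = (((if m = l then (1:ℝ) else 0) - if m = k then 1 else 0)
            * (β k - if k' = k then 1 else 0)) := by
      have hXe : ∀ k' : Fin K, ⟪β k • e - v k', e⟫ = β k - (if k' = k then 1 else 0) := by
        intro k'
        rw [inner_sub_left, real_inner_smul_left, he, mul_one]
        congr 1
        by_cases h3 : k' = k
        · have hvk : v k' = e := by simp [hv, h3]
          rw [hvk, if_pos h3]; exact he
        · have hvk : v k' = 0 := by simp [hv, h3]
          rw [hvk, if_neg h3]; exact inner_zero_left e
      intro k' m
      rw [hVe]
      have hgm : g m = (if m = l then e else 0) - (if m = k then e else 0) := by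
        simp [hgdef]
      rw [hgm, inner_sub_right]
      by_cases h1 : m = l
      · have h2 : ¬ (m = k) := fun h => hkl (by rw [← h, h1])
        rw [if_pos h1, if_neg h2, if_pos h1, if_neg h2, inner_zero_right, sub_zero,
          hXe]
        ring
      · rw [if_neg h1, if_neg h1, inner_zero_right, zero_sub]
        by_cases h2 : m = k
        · rw [if_pos h2, if_pos h2, hXe]; ring
        · rw [if_neg h2, if_neg h2, inner_zero_right]; ring
    have E := hQzero v g hg
    simp only [hinner] at E
    -- now a scalar identity
    set S : Fin K → ℝ := fun m => ∑ k' ∈ univ.erase m, (Q k' m - p k') with hS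
    have hSdiff : S l - S k = p l - p k := by
      simp only [hS, sum_sub_distrib]
      rw [hQconst l k, sum_erase_eq_sub (mem_univ l), sum_erase_eq_sub (mem_univ k),
        sum_erase_eq_sub (mem_univ k)]
      ring
    have hstep : ∀ k' : Fin K, ∑ m ∈ univ.erase k', (Q k' m - p k') *
        (((if m = l then (1:ℝ) else 0) - if m = k then 1 else 0)
          * (β k - if k' = k then 1 else 0))
        = (if l ∈ univ.erase k' then (Q k' l - p k') * (β k - if k' = k then 1 else 0) else 0)
          - (if k ∈ univ.erase k' then (Q k' k - p k') * (β k - if k' = k then 1 else 0) else 0) := by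
      intro k'
      have hterm : ∀ m : Fin K, (Q k' m - p k') *
          (((if m = l then (1:ℝ) else 0) - if m = k then 1 else 0)
            * (β k - if k' = k then 1 else 0))
          = (if m = l then (Q k' m - p k') * (β k - if k' = k then 1 else 0) else 0)
            - (if m = k then (Q k' m - p k') * (β k - if k' = k then 1 else 0) else 0) := by
        intro m
        by_cases h1 : m = l <;> by_cases h2 : m = k <;>
          simp [h1, h2, hkl, Ne.symm hkl] <;> ring
      rw [Finset.sum_congr rfl (fun m _ => hterm m), sum_sub_distrib,
        Finset.sum_ite_eq' (univ.erase k') l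
          (fun m => (Q k' m - p k') * (β k - if k' = k then 1 else 0)),
        Finset.sum_ite_eq' (univ.erase k') k
          (fun m => (Q k' m - p k') * (β k - if k' = k then 1 else 0))]
    rw [Finset.sum_congr rfl (fun k' _ => hstep k')] at E
    rw [sum_sub_distrib] at E
    have hT1 : ∑ k' : Fin K,
        (if l ∈ univ.erase k' then (Q k' l - p k') * (β k - if k' = k then 1 else 0) else 0)
        = β k * S l - (Q k l - p k) := by
      have hrw : ∀ k' : Fin K,
          (if l ∈ univ.erase k' then (Q k' l - p k') * (β k - if k' = k then 1 else 0) else 0)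
          = (if k' ∈ univ.erase l then (Q k' l - p k') * (β k - if k' = k then 1 else 0) else 0) := by
        intro k'
        by_cases h : k' = l
        · subst h; simp [mem_erase]
        · have h' : ¬ l = k' := fun hh => h hh.symm
          simp [mem_erase, h, h']
      rw [Finset.sum_congr rfl (fun k' _ => hrw k'), Finset.sum_ite_mem,
        Finset.univ_inter]
      have hmid : ∑ k' ∈ univ.erase l, (Q k' l - p k') * (β k - if k' = k then 1 else 0)
          = β k * S l - ∑ k' ∈ univ.erase l, (if k' = k then Q k' l - p k' else 0) := by
        simp only [hS]
        rw [Finset.mul_sum, ← sum_sub_distrib]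
        refine Finset.sum_congr rfl fun k' _ => ?_
        by_cases h : k' = k <;> simp [h] <;> ring
      rw [hmid, Finset.sum_ite_eq' (univ.erase l) k (fun k' => Q k' l - p k')]
      have hk : k ∈ univ.erase l := mem_erase.2 ⟨hkl, mem_univ _⟩
      rw [if_pos hk]
    have hT2 : ∑ k' : Fin K,
        (if k ∈ univ.erase k' then (Q k' k - p k') * (β k - if k' = k then 1 else 0) else 0)
        = β k * S k := by
      have hrw : ∀ k' : Fin K,
          (if k ∈ univ.erase k' then (Q k' k - p k') * (β k - if k' = k then 1 else 0) else 0)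
          = (if k' ∈ univ.erase k then (Q k' k - p k') * (β k - if k' = k then 1 else 0) else 0) := by
        intro k'
        by_cases h : k' = k
        · subst h; simp [mem_erase]
        · have h' : ¬ k = k' := fun hh => h hh.symm
          simp [mem_erase, h, h']
      rw [Finset.sum_congr rfl (fun k' _ => hrw k'), Finset.sum_ite_mem,
        Finset.univ_inter]
      have hmid : ∑ k' ∈ univ.erase k, (Q k' k - p k') * (β k - if k' = k then 1 else 0)
          = ∑ k' ∈ univ.erase k, β k * (Q k' k - p k') := by
        refine Finset.sum_congr rfl fun k' hk' => ?_
        have h := (mem_erase.1 hk').1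
        simp [h]; ring
      rw [hmid, ← Finset.mul_sum]
    rw [hT1, hT2] at E
    have : β k * (S l - S k) - (Q k l - p k) = 0 := by linarith
    rw [hSdiff] at this
    linarith
end

section
/- Let d ≥ 1, let θ ≥ 0 and a ≥ 0, let 0 < c ≤ 1, let g_1, g_2 ∈ ℝ with g_1 ≠ g_2, let p_1, p_2 ∈ ℝ, and let v_1, v_2 ∈ ℝ^d. Set the mass flux ṁ := a·(g_2 − g_1), the interfacial velocity v̂ := (v_1 + v_2)/2, and the interfacial density ϱ := (p_2 − p_1)/(c·(g_2 − g_1)), assuming p_1 ≠ p_2 so that ϱ ≠ 0. Then: (i) ‖v̂ − v_1‖² = ‖v̂ − v_2‖², so the entropy production is independent of the velocities; (ii) the entropy production due to relaxation of the Gibbs free energies satisfies S_U^μ := −θ·ṁ·( g_2 − g_1 + (p_1 − p_2)/ϱ ) = −θ·a·(1 − c)·(g_2 − g_1)², and hence S_U^μ ≤ 0. -/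
/-- Entropy production due to relaxation of the Gibbs free energies (two-component
isothermal model): with mass flux `ṁ = a(g₂ − g₁)`, interfacial velocity
`v̂ = (v₁ + v₂)/2` and interfacial density `ϱ = (p₂ − p₁)/(c(g₂ − g₁))`, `0 < c ≤ 1`:
(i) `‖v̂ − v₁‖² = ‖v̂ − v₂‖²`;
(ii) `S_U^μ = −θṁ(g₂ − g₁ + (p₁ − p₂)/ϱ) = −θa(1 − c)(g₂ − g₁)² ≤ 0`. -/
theorem gibbs_relaxation_entropy_production (d : ℕ) (hd : 1 ≤ d)
    (θ a c : ℝ) (hθ : 0 ≤ θ) (ha : 0 ≤ a) (hc0 : 0 < c) (hc1 : c ≤ 1)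
    (g₁ g₂ p₁ p₂ : ℝ) (hg : g₁ ≠ g₂) (hp : p₁ ≠ p₂)
    (v₁ v₂ : EuclideanSpace ℝ (Fin d)) :
    (‖(1 / 2 : ℝ) • (v₁ + v₂) - v₁‖ ^ 2 = ‖(1 / 2 : ℝ) • (v₁ + v₂) - v₂‖ ^ 2) ∧
    (-θ * (a * (g₂ - g₁)) * (g₂ - g₁ + (p₁ - p₂) / ((p₂ - p₁) / (c * (g₂ - g₁))))
      = -θ * a * (1 - c) * (g₂ - g₁) ^ 2) ∧
    (-θ * a * (1 - c) * (g₂ - g₁) ^ 2 ≤ 0) := by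
  refine ⟨?_, ?_, ?_⟩
  · have h : (1 / 2 : ℝ) • (v₁ + v₂) - v₁ = -((1 / 2 : ℝ) • (v₁ + v₂) - v₂) := by
      module
    rw [h, norm_neg]
  · have hg' : g₂ - g₁ ≠ 0 := sub_ne_zero.mpr (Ne.symm hg)
    have hp' : p₂ - p₁ ≠ 0 := sub_ne_zero.mpr (Ne.symm hp)
    have hc' : c ≠ 0 := hc0.ne'
    field_simp
    ring
  · have h1 : 0 ≤ 1 - c := by linarith
    have : 0 ≤ θ * a * (1 - c) * (g₂ - g₁) ^ 2 := by positivity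
    linarith
end

section
/- Let θ ≥ 0, a ≥ 0, κ ∈ ℝ, let g_1, g_2 ∈ ℝ, and let α_1 > 0, α_3 > 0. Define the chemical potentials μ_1 := g_1 + κ·ln( α_1/(α_1 + α_3) ) and μ_2 := g_2, and the mass flux ṁ := a·(μ_2 − μ_1). Then the total entropy production satisfies the identity −θ·ṁ·(g_2 − g_1) + θ·ṁ·κ·ln( α_1/(α_1 + α_3) ) = −θ·a·(μ_2 − μ_1)², and hence it is non-positive: S_U^μ − T_ref·S_{S_M}^μ = −θ·ṁ·(μ_2 − μ_1) ≤ 0. -/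
/-- Entropy production due to relaxation of chemical potentials (three-component
isothermal model, homogeneous mixture): with `μ₁ = g₁ + κ ln(α₁/(α₁+α₃))`, `μ₂ = g₂`
and mass flux `ṁ = a(μ₂ − μ₁)`, the total entropy production satisfies
`−θṁ(g₂ − g₁) + θṁκ ln(α₁/(α₁+α₃)) = −θa(μ₂ − μ₁)²` and hence
`S_U^μ − T_ref S_{S_M}^μ = −θṁ(μ₂ − μ₁) ≤ 0`. -/
theorem chemical_potential_relaxation_entropy_production
    (θ a κ g₁ g₂ α₁ α₃ : ℝ) (hθ : 0 ≤ θ) (ha : 0 ≤ a)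
    (hα₁ : 0 < α₁) (hα₃ : 0 < α₃) :
    (-θ * (a * (g₂ - (g₁ + κ * Real.log (α₁ / (α₁ + α₃))))) * (g₂ - g₁)
        + θ * (a * (g₂ - (g₁ + κ * Real.log (α₁ / (α₁ + α₃)))))
            * (κ * Real.log (α₁ / (α₁ + α₃)))
      = -θ * a * (g₂ - (g₁ + κ * Real.log (α₁ / (α₁ + α₃)))) ^ 2) ∧
    (-θ * (a * (g₂ - (g₁ + κ * Real.log (α₁ / (α₁ + α₃)))))
        * (g₂ - (g₁ + κ * Real.log (α₁ / (α₁ + α₃)))) ≤ 0) := by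
  constructor
  · ring
  · nlinarith [sq_nonneg (g₂ - (g₁ + κ * Real.log (α₁ / (α₁ + α₃)))), mul_nonneg hθ ha]
end

section
/- Let K ≥ 1, let C_1,…,C_K > 0, let π ∈ ℝ, and let α_1⁰,…,α_K⁰ ∈ (0,1) with Σ_{k=1}^K α_k⁰ = 1 and ρ_1⁰,…,ρ_K⁰ > 0. Define ρ_j^∞ := (1/C_j)·Σ_{k=1}^K α_k⁰ ρ_k⁰ C_k and α_j^∞ := α_j⁰ ρ_j⁰ / ρ_j^∞ for j = 1,…,K. Then: (i) ρ_j^∞ > 0 and α_j^∞ ∈ (0,1) for all j; (ii) Σ_{j=1}^K α_j^∞ = 1 (saturation); (iii) α_j^∞ ρ_j^∞ = α_j⁰ ρ_j⁰ for all j (mass conservation); (iv) the pressures are in equilibrium: C_j ρ_j^∞ − π = C_i ρ_i^∞ − π for all i, j, with common value p^∞ = Σ_k α_k⁰ ρ_k⁰ C_k − π > −π. Moreover this equilibrium is unique: if ρ_j > 0 and α_j ∈ (0,1) satisfy Σ_j α_j = 1, α_j ρ_j = α_j⁰ ρ_j⁰ for all j, and C_j ρ_j − π is independent of j, then ρ_j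 = ρ_j^∞ and α_j = α_j^∞ for all j. -/
open Finset

/-- Pressure-relaxation equilibrium for `K` isothermal stiffened gases with equal
minimal pressures `π`: `ρ_j^∞ = (1/C_j) Σ_k α_k⁰ρ_k⁰C_k` and `α_j^∞ = α_j⁰ρ_j⁰/ρ_j^∞`
define the unique equilibrium: all `ρ_j^∞ > 0`, all `α_j^∞ ∈ (0,1)`, saturation and
phasic mass conservation hold, the pressures `C_jρ_j^∞ − π` are in equilibrium with
common value `p^∞ = Σ_k α_k⁰ρ_k⁰C_k − π > −π`, and any other state satisfying the
constraints coincides with it. -/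
theorem isothermal_pressure_relaxation_equilibrium (K : ℕ) (hK : 1 ≤ K)
    (C : Fin K → ℝ) (hC : ∀ k, 0 < C k) (piMin : ℝ)
    (α₀ ρ₀ : Fin K → ℝ) (hα₀ : ∀ k, α₀ k ∈ Set.Ioo (0 : ℝ) 1)
    (hsat₀ : ∑ k, α₀ k = 1) (hρ₀ : ∀ k, 0 < ρ₀ k)
    (rhoInf alphaInf : Fin K → ℝ)
    (hrhoInf : ∀ j, rhoInf j = (1 / C j) * ∑ k, α₀ k * ρ₀ k * C k)
    (halphaInf : ∀ j, alphaInf j = α₀ j * ρ₀ j / rhoInf j) :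
    (∀ j, 0 < rhoInf j) ∧
    (∀ j, alphaInf j ∈ Set.Ioo (0 : ℝ) 1) ∧
    (∑ j, alphaInf j = 1) ∧
    (∀ j, alphaInf j * rhoInf j = α₀ j * ρ₀ j) ∧
    (∀ i j, C j * rhoInf j - piMin = C i * rhoInf i - piMin) ∧
    (∀ j, C j * rhoInf j - piMin = (∑ k, α₀ k * ρ₀ k * C k) - piMin) ∧
    (-piMin < (∑ k, α₀ k * ρ₀ k * C k) - piMin) ∧
    (∀ ρ α : Fin K → ℝ, (∀ j, 0 < ρ j) → (∀ j, α j ∈ Set.Ioo (0 : ℝ) 1) →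
      (∑ j, α j = 1) → (∀ j, α j * ρ j = α₀ j * ρ₀ j) →
      (∀ i j, C j * ρ j - piMin = C i * ρ i - piMin) →
      ∀ j, ρ j = rhoInf j ∧ α j = alphaInf j) := by
  have hKne : Nonempty (Fin K) := ⟨⟨0, hK⟩⟩
  have hterm : ∀ k, 0 < α₀ k * ρ₀ k * C k := fun k =>
    mul_pos (mul_pos (hα₀ k).1 (hρ₀ k)) (hC k)
  have hS : 0 < ∑ k, α₀ k * ρ₀ k * C k :=
    Finset.sum_pos (fun k _ => hterm k) Finset.univ_nonempty
  set S := ∑ k, α₀ k * ρ₀ k * C k with hSdef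
  have hrho : ∀ j, rhoInf j = S / C j := by
    intro j; rw [hrhoInf j]; ring
  have hrhopos : ∀ j, 0 < rhoInf j := fun j => by
    rw [hrho j]; exact div_pos hS (hC j)
  have halpha : ∀ j, alphaInf j = α₀ j * ρ₀ j * C j / S := by
    intro j
    rw [halphaInf j, hrho j, div_div_eq_mul_div]
  have hlt : ∀ j, α₀ j * ρ₀ j * C j < S := by
    intro j
    have h1 : ∑ k ∈ Finset.univ.erase j, α₀ k = 1 - α₀ j := by
      rw [Finset.sum_erase_eq_sub (Finset.mem_univ j), hsat₀]
    have hpos : 0 < ∑ k ∈ Finset.univ.erase j, α₀ k := by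
      rw [h1]; linarith [(hα₀ j).2]
    have hne : (Finset.univ.erase j).Nonempty := by
      rcases Finset.eq_empty_or_nonempty (Finset.univ.erase j) with h | h
      · rw [h] at hpos; simp at hpos
      · exact h
    have h2 : 0 < ∑ k ∈ Finset.univ.erase j, α₀ k * ρ₀ k * C k :=
      Finset.sum_pos (fun k _ => hterm k) hne
    have h3 : α₀ j * ρ₀ j * C j + ∑ k ∈ Finset.univ.erase j, α₀ k * ρ₀ k * C k = S :=
      (Finset.add_sum_erase Finset.univ (fun k => α₀ k * ρ₀ k * C k)
        (Finset.mem_univ j)).trans hSdef.symm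
    linarith
  have hpress : ∀ j, C j * rhoInf j = S := by
    intro j; rw [hrho j, mul_comm, div_mul_cancel₀ S (hC j).ne']
  refine ⟨hrhopos, ?_, ?_, ?_, ?_, ?_, ?_, ?_⟩
  · intro j
    constructor
    · rw [halpha j]; exact div_pos (hterm j) hS
    · rw [halpha j]; exact (div_lt_one hS).2 (hlt j)
  · simp_rw [halpha]
    rw [← Finset.sum_div, div_self hS.ne']
  · intro j
    rw [halphaInf j]
    exact div_mul_cancel₀ _ (hrhopos j).ne'
  · intro i j; rw [hpress i, hpress j]
  · intro j; rw [hpress j]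
  · linarith
  · intro ρ α hρ hα hsum hmass hpeq j
    have hCρ : ∀ i, C i * ρ i = C j * ρ j := by
      intro i
      have := hpeq j i
      linarith
    have hPpos : 0 < C j * ρ j := mul_pos (hC j) (hρ j)
    have hαval : ∀ i, α i = α₀ i * ρ₀ i * C i / (C j * ρ j) := by
      intro i
      have hρi : ρ i = (C j * ρ j) / C i := by
        rw [eq_div_iff (hC i).ne']
        have := hCρ i; linarith
      have hαi : α i = α₀ i * ρ₀ i / ρ i := by
        rw [eq_div_iff (hρ i).ne']; exact hmass i
      rw [hαi, hρi, div_div_eq_mul_div]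
    have hPS : C j * ρ j = S := by
      have h1 : (1:ℝ) = S / (C j * ρ j) := by
        rw [← hsum]
        simp_rw [hαval]
        rw [← Finset.sum_div]
      rw [eq_div_iff hPpos.ne'] at h1
      linarith
    have hρj : ρ j = rhoInf j := by
      rw [hrho j, ← hPS, eq_div_iff (hC j).ne']
      ring
    refine ⟨hρj, ?_⟩
    rw [halphaInf j, ← hρj, eq_div_iff (hρ j).ne']
    exact hmass j
end

section
/- Let C_1, C_2 > 0, π_2 > 0, let α_1⁰, α_2⁰ ∈ (0,1) with α_1⁰ + α_2⁰ = 1, and let ρ_1⁰, ρ_2⁰ > 0. Define X_1 := ( −π_2 + α_1⁰ρ_1⁰C_1 + α_2⁰ρ_2⁰C_2 )/C_1 and X_2 := −(π_2/C_1)·α_1⁰ρ_1⁰. Then X_1²/4 − X_2 > 0, and ρ_1^∞ := X_1/2 + √(X_1²/4 − X_2) is the unique positive root of the quadratic ρ² − X_1·ρ + X_2 = 0. Moreover, setting α_1^∞ := α_1⁰ρ_1⁰/ρ_1^∞, α_2^∞ := 1 − α_1^∞ and ρ_2^∞ := α_2⁰ρ_2⁰/α_2^∞, one has: ρ_1^∞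 > 0, ρ_2^∞ > 0, α_1^∞ ∈ (0,1), α_2^∞ ∈ (0,1), the phasic masses are conserved (α_k^∞ ρ_k^∞ = α_k⁰ ρ_k⁰ for k = 1,2), and the pressures are in equilibrium: C_1·ρ_1^∞ = C_2·ρ_2^∞ − π_2, with common value p^∞ = C_1 ρ_1^∞ > −π_2. -/
set_option maxHeartbeats 1600000


/-- Pressure-relaxation equilibrium for a two-component mixture: ideal gas
(`p₁ = C₁ρ₁`) and stiffened gas (`p₂ = C₂ρ₂ − π₂`, `π₂ > 0`). The discriminant
`X₁²/4 − X₂` is positive, `ρ₁^∞ = X₁/2 + √(X₁²/4 − X₂)` is the unique positive root of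
`ρ² − X₁ρ + X₂ = 0`, and the resulting state conserves the phasic masses, satisfies
`ρ₁^∞, ρ₂^∞ > 0`, `α₁^∞, α₂^∞ ∈ (0,1)`, and pressure equilibrium
`C₁ρ₁^∞ = C₂ρ₂^∞ − π₂` with `p^∞ = C₁ρ₁^∞ > −π₂`. -/
theorem two_component_pressure_relaxation_equilibrium
    (C₁ C₂ π₂ : ℝ) (hC₁ : 0 < C₁) (hC₂ : 0 < C₂) (hπ₂ : 0 < π₂)
    (α₁₀ α₂₀ ρ₁₀ ρ₂₀ : ℝ) (hα₁₀ : α₁₀ ∈ Set.Ioo (0 : ℝ) 1)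
    (hα₂₀ : α₂₀ ∈ Set.Ioo (0 : ℝ) 1) (hsat₀ : α₁₀ + α₂₀ = 1)
    (hρ₁₀ : 0 < ρ₁₀) (hρ₂₀ : 0 < ρ₂₀)
    (X₁ X₂ rho1Inf alpha1Inf alpha2Inf rho2Inf : ℝ)
    (hX₁ : X₁ = (-π₂ + α₁₀ * ρ₁₀ * C₁ + α₂₀ * ρ₂₀ * C₂) / C₁)
    (hX₂ : X₂ = -(π₂ / C₁) * (α₁₀ * ρ₁₀))
    (hrho1 : rho1Inf = X₁ / 2 + Real.sqrt (X₁ ^ 2 / 4 - X₂))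
    (halpha1 : alpha1Inf = α₁₀ * ρ₁₀ / rho1Inf)
    (halpha2 : alpha2Inf = 1 - alpha1Inf)
    (hrho2 : rho2Inf = α₂₀ * ρ₂₀ / alpha2Inf) :
    (0 < X₁ ^ 2 / 4 - X₂) ∧
    (rho1Inf ^ 2 - X₁ * rho1Inf + X₂ = 0) ∧
    (0 < rho1Inf) ∧
    (∀ ρ : ℝ, 0 < ρ → ρ ^ 2 - X₁ * ρ + X₂ = 0 → ρ = rho1Inf) ∧
    (0 < rho2Inf) ∧
    (alpha1Inf ∈ Set.Ioo (0 : ℝ) 1) ∧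
    (alpha2Inf ∈ Set.Ioo (0 : ℝ) 1) ∧
    (alpha1Inf * rho1Inf = α₁₀ * ρ₁₀) ∧
    (alpha2Inf * rho2Inf = α₂₀ * ρ₂₀) ∧
    (C₁ * rho1Inf = C₂ * rho2Inf - π₂) ∧
    (-π₂ < C₁ * rho1Inf) := by
  obtain ⟨hα₁₀p, hα₁₀1⟩ := hα₁₀
  obtain ⟨hα₂₀p, hα₂₀1⟩ := hα₂₀
  have ha : 0 < α₁₀ * ρ₁₀ := mul_pos hα₁₀p hρ₁₀
  have hb : 0 < α₂₀ * ρ₂₀ := mul_pos hα₂₀p hρ₂₀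
  have hX₂neg : X₂ < 0 := by
    rw [hX₂]
    have : 0 < π₂ / C₁ := div_pos hπ₂ hC₁
    nlinarith
  have hdisc : 0 < X₁ ^ 2 / 4 - X₂ := by nlinarith [sq_nonneg X₁]
  set s := Real.sqrt (X₁ ^ 2 / 4 - X₂) with hs
  have hs0 : 0 ≤ s := Real.sqrt_nonneg _
  have hssq : s ^ 2 = X₁ ^ 2 / 4 - X₂ := Real.sq_sqrt hdisc.le
  have hr : 0 < rho1Inf := by
    rw [hrho1]; nlinarith
  have hroot : rho1Inf ^ 2 - X₁ * rho1Inf + X₂ = 0 := by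
    rw [hrho1]; nlinarith
  -- f(α₁₀ρ₁₀) < 0
  have hfa : (α₁₀ * ρ₁₀) ^ 2 - X₁ * (α₁₀ * ρ₁₀) + X₂ < 0 := by
    rw [hX₁, hX₂]
    field_simp
    ring_nf
    nlinarith [mul_pos (mul_pos ha hb) hC₂]
  have hsx : X₁ / 2 < s := by nlinarith
  have hrX : X₁ < rho1Inf := by rw [hrho1]; linarith
  have halt : α₁₀ * ρ₁₀ < rho1Inf := by
    have hsum : 0 < α₁₀ * ρ₁₀ + rho1Inf - X₁ := by linarith
    have hid : (α₁₀ * ρ₁₀ - rho1Inf) * (α₁₀ * ρ₁₀ + rho1Inf - X₁)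
        = ((α₁₀ * ρ₁₀) ^ 2 - X₁ * (α₁₀ * ρ₁₀) + X₂)
          - (rho1Inf ^ 2 - X₁ * rho1Inf + X₂) := by ring
    have hprod : (α₁₀ * ρ₁₀ - rho1Inf) * (α₁₀ * ρ₁₀ + rho1Inf - X₁) < 0 := by
      rw [hid, hroot]; linarith
    by_contra h
    push_neg at h
    exact absurd hprod (not_lt.mpr (mul_nonneg (by linarith) hsum.le))
  have hα1p : 0 < alpha1Inf := by rw [halpha1]; exact div_pos ha hr
  have hα1lt : alpha1Inf < 1 := by rw [halpha1]; exact (div_lt_one hr).mpr halt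
  have hα2p : 0 < alpha2Inf := by rw [halpha2]; linarith
  have hα2lt : alpha2Inf < 1 := by rw [halpha2]; linarith
  have hr2 : 0 < rho2Inf := by rw [hrho2]; exact div_pos hb hα2p
  have hmass1 : alpha1Inf * rho1Inf = α₁₀ * ρ₁₀ := by
    rw [halpha1]; field_simp
  have hmass2 : alpha2Inf * rho2Inf = α₂₀ * ρ₂₀ := by
    rw [hrho2]; field_simp
  refine ⟨hdisc, hroot, hr, ?_, hr2, ⟨hα1p, hα1lt⟩, ⟨hα2p, hα2lt⟩, hmass1, hmass2, ?_, ?_⟩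
  · intro ρ hρ hρeq
    have hfac : (ρ - rho1Inf) * (ρ + rho1Inf - X₁) = 0 := by nlinarith
    rcases mul_eq_zero.mp hfac with h | h
    · linarith
    · exfalso
      have : X₁ < rho1Inf := by rw [hrho1]; linarith
      linarith
  · -- pressure equilibrium
    have hrne : rho1Inf ≠ 0 := ne_of_gt hr
    have hX₁' : C₁ * X₁ = -π₂ + α₁₀ * ρ₁₀ * C₁ + α₂₀ * ρ₂₀ * C₂ := by
      rw [hX₁]; field_simp
    have hX₂' : C₁ * X₂ = -π₂ * (α₁₀ * ρ₁₀) := by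
      rw [hX₂]; field_simp
    have key : C₁ * rho1Inf * (rho1Inf - α₁₀ * ρ₁₀)
        = C₂ * (α₂₀ * ρ₂₀) * rho1Inf - π₂ * (rho1Inf - α₁₀ * ρ₁₀) := by
      linear_combination C₁ * hroot + rho1Inf * hX₁' - hX₂'
    have hra : rho1Inf - α₁₀ * ρ₁₀ ≠ 0 := ne_of_gt (by linarith)
    have hα2eq : alpha2Inf = (rho1Inf - α₁₀ * ρ₁₀) / rho1Inf := by
      rw [halpha2, halpha1]; field_simp
    rw [hrho2, hα2eq]
    field_simp
    linear_combination key
  · nlinarith [mul_pos hC₁ hr]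
end

section
/- Let K ≥ 2, let A_1,…,A_K > 0, let γ_1,…,γ_K > 1, let m_1,…,m_K > 0, and let π_1,…,π_K ∈ ℝ with π_k ≥ π_1 for all k. Define F : [0,1] → ℝ by F(α) := α + Σ_{k=2}^K [ A_k·m_k^{γ_k}·α^{γ_1} / ( A_1·m_1^{γ_1} + (π_k − π_1)·α^{γ_1} ) ]^{1/γ_k} − 1. Then F is continuous and strictly increasing on [0,1], F(0) = −1 < 0 and F(1) > 0; consequently there exists a unique α_1^∞ ∈ (0,1) with F(α_1^∞) = 0. -/
open Finset

/-- Pressure-relaxation equilibrium for `K ≥ 2` isentropic stiffened gases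
(`p_k + π_k = A_k ρ_k^{γ_k}`, components numbered so that `π_1 = min_k π_k`, conserved
phasic masses `m_k > 0`): the function
`F(α) = α + Σ_{k≥2} (A_k m_k^{γ_k} α^{γ_1} / (A_1 m_1^{γ_1} + (π_k − π_1)α^{γ_1}))^{1/γ_k} − 1`
is continuous and strictly increasing on `[0,1]` with `F(0) = −1 < 0` and `F(1) > 0`;
hence it has a unique root `α_1^∞ ∈ (0,1)`. -/
theorem isentropic_pressure_relaxation_unique_root (K : ℕ) [NeZero K] (hK : 2 ≤ K)
    (A γ m piC : Fin K → ℝ) (hA : ∀ k, 0 < A k) (hγ : ∀ k, 1 < γ k)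
    (hm : ∀ k, 0 < m k) (hpi : ∀ k, piC 0 ≤ piC k)
    (F : ℝ → ℝ)
    (hF : ∀ α : ℝ, F α = α + (∑ k ∈ univ.erase (0 : Fin K),
        (A k * m k ^ (γ k) * α ^ (γ 0)
          / (A 0 * m 0 ^ (γ 0) + (piC k - piC 0) * α ^ (γ 0))) ^ (1 / γ k)) - 1) :
    ContinuousOn F (Set.Icc 0 1) ∧
    StrictMonoOn F (Set.Icc 0 1) ∧
    F 0 = -1 ∧
    0 < F 1 ∧
    ∃! α : ℝ, α ∈ Set.Ioo (0 : ℝ) 1 ∧ F α = 0 := by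

  have hγ0 : (0:ℝ) < γ 0 := lt_trans one_pos (hγ 0)
  have hcpos : 0 < A 0 * m 0 ^ (γ 0) :=
    mul_pos (hA 0) (Real.rpow_pos_of_pos (hm 0) _)
  have hden : ∀ (k : Fin K) (α : ℝ), 0 ≤ α →
      0 < A 0 * m 0 ^ (γ 0) + (piC k - piC 0) * α ^ (γ 0) := by
    intro k α hα
    have h1 : 0 ≤ (piC k - piC 0) * α ^ (γ 0) :=
      mul_nonneg (by linarith [hpi k]) (Real.rpow_nonneg hα _)
    linarith
  have hbase : ∀ (k : Fin K) (α : ℝ), 0 ≤ α →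
      0 ≤ A k * m k ^ (γ k) * α ^ (γ 0)
          / (A 0 * m 0 ^ (γ 0) + (piC k - piC 0) * α ^ (γ 0)) := by
    intro k α hα
    apply div_nonneg _ (hden k α hα).le
    exact mul_nonneg (mul_nonneg (hA k).le (Real.rpow_nonneg (hm k).le _))
      (Real.rpow_nonneg hα _)
  -- continuity
  have hcont : ContinuousOn F (Set.Icc 0 1) := by
    have : ContinuousOn (fun α : ℝ => α + (∑ k ∈ univ.erase (0 : Fin K),
        (A k * m k ^ (γ k) * α ^ (γ 0)
          / (A 0 * m 0 ^ (γ 0) + (piC k - piC 0) * α ^ (γ 0))) ^ (1 / γ k)) - 1)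
        (Set.Icc 0 1) := by
      apply ContinuousOn.sub _ continuousOn_const
      apply ContinuousOn.add continuousOn_id
      apply continuousOn_finset_sum
      intro k _
      apply ContinuousOn.rpow_const
      · apply ContinuousOn.div
        · exact continuousOn_const.mul
            (continuousOn_id.rpow_const (fun x _ => Or.inr hγ0.le))
        · exact continuousOn_const.add (continuousOn_const.mul
            (continuousOn_id.rpow_const (fun x _ => Or.inr hγ0.le)))
        · intro x hx
          exact (hden k x hx.1).ne'
      · intro x _
        exact Or.inr (one_div_nonneg.mpr (by linarith [hγ k]))
    exact this.congr (fun x _ => hF x)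
  -- strict monotonicity
  have hmono : StrictMonoOn F (Set.Icc 0 1) := by
    intro a ha b hb hab
    rw [hF a, hF b]
    have hsum : (∑ k ∈ univ.erase (0 : Fin K),
        (A k * m k ^ (γ k) * a ^ (γ 0)
          / (A 0 * m 0 ^ (γ 0) + (piC k - piC 0) * a ^ (γ 0))) ^ (1 / γ k)) ≤
        (∑ k ∈ univ.erase (0 : Fin K),
        (A k * m k ^ (γ k) * b ^ (γ 0)
          / (A 0 * m 0 ^ (γ 0) + (piC k - piC 0) * b ^ (γ 0))) ^ (1 / γ k)) := by
      apply Finset.sum_le_sum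
      intro k _
      apply Real.rpow_le_rpow (hbase k a ha.1) _ (one_div_nonneg.mpr (by linarith [hγ k]))
      rw [div_le_div_iff₀ (hden k a ha.1) (hden k b hb.1)]
      have hrp : a ^ (γ 0) ≤ b ^ (γ 0) := Real.rpow_le_rpow ha.1 hab.le hγ0.le
      have hApos : 0 ≤ A k * m k ^ (γ k) :=
        mul_nonneg (hA k).le (Real.rpow_nonneg (hm k).le _)
      nlinarith [Real.rpow_nonneg ha.1 (γ 0), Real.rpow_nonneg hb.1 (γ 0),
        mul_nonneg hApos hcpos.le]
    linarith
  -- F 0 = -1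
  have hF0 : F 0 = -1 := by
    rw [hF]
    have h0 : (0:ℝ) ^ (γ 0) = 0 := Real.zero_rpow hγ0.ne'
    have : (∑ k ∈ univ.erase (0 : Fin K),
        (A k * m k ^ (γ k) * (0:ℝ) ^ (γ 0)
          / (A 0 * m 0 ^ (γ 0) + (piC k - piC 0) * (0:ℝ) ^ (γ 0))) ^ (1 / γ k)) = 0 := by
      apply Finset.sum_eq_zero
      intro k _
      rw [h0]
      have h1γ : (1 / γ k) ≠ 0 := by
        have := hγ k; positivity
      rw [mul_zero, zero_div, Real.zero_rpow h1γ]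
    rw [this]; ring
  -- F 1 > 0
  have hF1 : 0 < F 1 := by
    rw [hF]
    have hpos : 0 < (∑ k ∈ univ.erase (0 : Fin K),
        (A k * m k ^ (γ k) * (1:ℝ) ^ (γ 0)
          / (A 0 * m 0 ^ (γ 0) + (piC k - piC 0) * (1:ℝ) ^ (γ 0))) ^ (1 / γ k)) := by
      apply Finset.sum_pos
      · intro k _
        apply Real.rpow_pos_of_pos
        rw [Real.one_rpow]
        apply div_pos
        · have := Real.rpow_pos_of_pos (hm k) (γ k)
          have := hA k
          nlinarith
        · have := hden k 1 zero_le_one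
          simpa using this
      · refine ⟨⟨1, by omega⟩, ?_⟩
        simp only [Finset.mem_erase, Finset.mem_univ, and_true]
        intro h
        have := congrArg Fin.val h
        simp at this
    linarith
  refine ⟨hcont, hmono, hF0, hF1, ?_⟩
  -- existence
  have hivt : (0:ℝ) ∈ F '' Set.Ioo 0 1 := by
    apply intermediate_value_Ioo zero_le_one hcont
    rw [hF0]
    exact ⟨by norm_num, hF1⟩
  obtain ⟨α, hαmem, hαval⟩ := hivt
  refine ⟨α, ⟨hαmem, hαval⟩, ?_⟩
  rintro β ⟨hβmem, hβval⟩
  have hinj := hmono.injOn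
  exact hinj (Set.mem_Icc_of_Ioo hβmem) (Set.mem_Icc_of_Ioo hαmem) (hβval.trans hαval.symm)
end

section
/- Let d ≥ 1, let n ∈ ℝ^d with ‖n‖ = 1, let p₀ ∈ ℝ, let ρ₀ ≠ 0 and c₀ ≠ 0 be real numbers, and let F : ℝ → ℝ be differentiable at p₀ with F'(p₀) = 1/(ρ₀·c₀). Define Ψ_∓ : ℝ^d × ℝ → ℝ by Ψ_∓(v,p) := v·n ∓ F(p), and the acoustic eigenvectors r_± := ( ±(c₀/ρ₀)·n, c₀² ) ∈ ℝ^{d+1}. Then Ψ_∓ is (Fréchet) differentiable at every point (v, p₀), and its differential at (v,p₀) applied to r_± equals zero: DΨ_∓(v,p₀)[r_±] = 0. In other words, Ψ_∓ = v·n ∓ ∫ (c̄ρ)⁻¹ dp is a Riemann invariant of the acoustic characteristic field associated with the eigenvalue v·n ± c₀. -/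
open scoped RealInnerProductSpace

/-- Riemann invariants of the acoustic fields: if `F'(p₀) = 1/(ρ₀c₀)`, then the
functions `Ψ_∓(v,p) = v·n ∓ F(p)` are differentiable at every `(v,p₀)` and their
differentials annihilate the acoustic eigenvectors `r_± = (±(c₀/ρ₀)n, c₀²)`. -/
theorem acoustic_riemann_invariants (d : ℕ) (hd : 1 ≤ d)
    (n : EuclideanSpace ℝ (Fin d)) (hn : ‖n‖ = 1)
    (p₀ ρ₀ c₀ : ℝ) (hρ₀ : ρ₀ ≠ 0) (hc₀ : c₀ ≠ 0)
    (F : ℝ → ℝ) (hF : HasDerivAt F (1 / (ρ₀ * c₀)) p₀) :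
    ∀ v : EuclideanSpace ℝ (Fin d),
      (DifferentiableAt ℝ
          (fun q : EuclideanSpace ℝ (Fin d) × ℝ => ⟪q.1, n⟫ - F q.2) (v, p₀)) ∧
      (fderiv ℝ (fun q : EuclideanSpace ℝ (Fin d) × ℝ => ⟪q.1, n⟫ - F q.2) (v, p₀)
          ((c₀ / ρ₀) • n, c₀ ^ 2) = 0) ∧
      (DifferentiableAt ℝ
          (fun q : EuclideanSpace ℝ (Fin d) × ℝ => ⟪q.1, n⟫ + F q.2) (v, p₀)) ∧
      (fderiv ℝ (fun q : EuclideanSpace ℝ (Fin d) × ℝ => ⟪q.1, n⟫ + F q.2) (v, p₀)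
          (-(c₀ / ρ₀) • n, c₀ ^ 2) = 0) := by
  intro v
  have hinner : HasFDerivAt (fun q : EuclideanSpace ℝ (Fin d) × ℝ => ⟪q.1, n⟫)
      ((innerSL ℝ n).comp (ContinuousLinearMap.fst ℝ (EuclideanSpace ℝ (Fin d)) ℝ))
      (v, p₀) := by
    have h1 : HasFDerivAt (fun x : EuclideanSpace ℝ (Fin d) => ⟪x, n⟫)
        (innerSL ℝ n) v := by
      have := (innerSL ℝ n).hasFDerivAt (x := v)
      convert this using 1
      funext x
      simp only [innerSL_apply_apply, real_inner_comm]
    exact h1.comp (v, p₀) (hasFDerivAt_fst (𝕜 := ℝ) (p := (v, p₀)))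
  have hFq : HasFDerivAt (fun q : EuclideanSpace ℝ (Fin d) × ℝ => F q.2)
      ((ContinuousLinearMap.smulRight 1 (1 / (ρ₀ * c₀))).comp
        (ContinuousLinearMap.snd ℝ (EuclideanSpace ℝ (Fin d)) ℝ)) (v, p₀) :=
    hF.hasFDerivAt.comp (v, p₀) hasFDerivAt_snd
  have hsub := hinner.sub hFq
  have hadd := hinner.add hFq
  have hinner_eval : ∀ a : ℝ, ⟪n, a • n⟫ = a := by
    intro a
    rw [real_inner_smul_right, real_inner_self_eq_norm_sq, hn]
    ring
  refine ⟨hsub.differentiableAt, ?_, hadd.differentiableAt, ?_⟩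
  · rw [show fderiv ℝ (fun q : EuclideanSpace ℝ (Fin d) × ℝ => ⟪q.1, n⟫ - F q.2) (v, p₀) = _ from hsub.fderiv]
    simp only [ContinuousLinearMap.sub_apply, ContinuousLinearMap.comp_apply,
      ContinuousLinearMap.coe_fst', ContinuousLinearMap.coe_snd',
      ContinuousLinearMap.smulRight_apply, ContinuousLinearMap.one_apply,
      innerSL_apply_apply, smul_eq_mul, real_inner_smul_right,
      real_inner_self_eq_norm_sq, hn]
    field_simp
    ring
  · rw [show fderiv ℝ (fun q : EuclideanSpace ℝ (Fin d) × ℝ => ⟪q.1, n⟫ + F q.2) (v, p₀) = _ from hadd.fderiv]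
    simp only [ContinuousLinearMap.add_apply, ContinuousLinearMap.comp_apply,
      ContinuousLinearMap.coe_fst', ContinuousLinearMap.coe_snd',
      ContinuousLinearMap.smulRight_apply, ContinuousLinearMap.one_apply,
      innerSL_apply_apply, smul_eq_mul, real_inner_smul_right,
      real_inner_self_eq_norm_sq, hn]
    field_simp
    ring
end

section
/- Let d ≥ 1, let n ∈ ℝ^d with ‖n‖ = 1, let P : ℝ → ℝ and ρ₀ ∈ ℝ with ρ₀ > 0, and suppose the derivative P' of P exists in a neighbourhood of ρ₀, is itself differentiable at ρ₀ with P''(ρ₀) =: P₂, and satisfies P'(ρ₀) > 0; set c₀ := √(P'(ρ₀)). Let p₀ := P(ρ₀) and let R : ℝ → ℝ satisfy R(p₀) = ρ₀ and R'(p₀) = 1/P'(ρ₀) (R is the local inverse density–pressure map), and assume P' ∘ R is well defined and positive near p₀. Define λ_± : ℝ^d × ℝ → ℝ by λ_±(v,p) := v·n ± √(P'(R(p))), and r_± := ( ±(c₀/ρ₀)·n, c₀² ) ∈ ℝ^{d+1}. Then λ_± is differentiable at every point (v, p₀) and its differential applied to r_± equals Dλ_±(v,p₀)[r_±] = ±(c₀/ρ₀)·(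 1 + ρ₀·P₂/(2c₀²) ). In particular, if the fundamental derivative 𝒢 := 1 + ρ₀P₂/(2c₀²) is positive, this directional derivative is nonzero, i.e., the acoustic characteristic fields are genuinely nonlinear. -/
open scoped RealInnerProductSpace

/-- Genuine nonlinearity of the acoustic fields of a barotropic fluid: for a pressure
law `P` with `P'(ρ₀) > 0`, `P''(ρ₀) = P₂`, sound speed `c₀ = √(P'(ρ₀))` and local
inverse `R` of the density–pressure map, the eigenvalues `λ_±(v,p) = v·n ± √(P'(R(p)))`
are differentiable at `(v,p₀)` and their derivatives along the acoustic eigenvectors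
`r_± = (±(c₀/ρ₀)n, c₀²)` equal `±(c₀/ρ₀)(1 + ρ₀P₂/(2c₀²))`; in particular they are
nonzero when the fundamental derivative `𝒢 = 1 + ρ₀P₂/(2c₀²)` is positive. -/
theorem acoustic_fields_genuinely_nonlinear (d : ℕ) (hd : 1 ≤ d)
    (n : EuclideanSpace ℝ (Fin d)) (hn : ‖n‖ = 1)
    (P P' : ℝ → ℝ) (ρ₀ : ℝ) (hρ₀ : 0 < ρ₀)
    (hP : ∀ᶠ ρ in nhds ρ₀, HasDerivAt P (P' ρ) ρ)
    (hP'pos : 0 < P' ρ₀) (P₂ : ℝ) (hP₂ : HasDerivAt P' P₂ ρ₀)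
    (c₀ p₀ : ℝ) (hc₀ : c₀ = Real.sqrt (P' ρ₀)) (hp₀ : p₀ = P ρ₀)
    (R : ℝ → ℝ) (hR₀ : R p₀ = ρ₀) (hR' : HasDerivAt R (1 / P' ρ₀) p₀)
    (hposR : ∀ᶠ p in nhds p₀, 0 < P' (R p)) :
    ∀ v : EuclideanSpace ℝ (Fin d),
      (DifferentiableAt ℝ
          (fun q : EuclideanSpace ℝ (Fin d) × ℝ =>
            ⟪q.1, n⟫ + Real.sqrt (P' (R q.2))) (v, p₀)) ∧
      (fderiv ℝ (fun q : EuclideanSpace ℝ (Fin d) × ℝ =>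
            ⟪q.1, n⟫ + Real.sqrt (P' (R q.2))) (v, p₀) ((c₀ / ρ₀) • n, c₀ ^ 2)
        = (c₀ / ρ₀) * (1 + ρ₀ * P₂ / (2 * c₀ ^ 2))) ∧
      (DifferentiableAt ℝ
          (fun q : EuclideanSpace ℝ (Fin d) × ℝ =>
            ⟪q.1, n⟫ - Real.sqrt (P' (R q.2))) (v, p₀)) ∧
      (fderiv ℝ (fun q : EuclideanSpace ℝ (Fin d) × ℝ =>
            ⟪q.1, n⟫ - Real.sqrt (P' (R q.2))) (v, p₀) (-(c₀ / ρ₀) • n, c₀ ^ 2)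
        = -((c₀ / ρ₀) * (1 + ρ₀ * P₂ / (2 * c₀ ^ 2)))) ∧
      (0 < 1 + ρ₀ * P₂ / (2 * c₀ ^ 2) →
        fderiv ℝ (fun q : EuclideanSpace ℝ (Fin d) × ℝ =>
            ⟪q.1, n⟫ + Real.sqrt (P' (R q.2))) (v, p₀) ((c₀ / ρ₀) • n, c₀ ^ 2) ≠ 0) := by
  intro v
  have hc₀pos : 0 < c₀ := hc₀ ▸ Real.sqrt_pos.mpr hP'pos
  have hc₀sq : c₀ ^ 2 = P' ρ₀ := by rw [hc₀, Real.sq_sqrt hP'pos.le]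
  -- derivative of p ↦ P' (R p) at p₀
  have hPR : HasDerivAt (fun p => P' (R p)) (P₂ * (1 / P' ρ₀)) p₀ := by
    have := (hR₀ ▸ hP₂ : HasDerivAt P' P₂ (R p₀)).comp p₀ hR'
    exact this
  have hPRne : P' (R p₀) ≠ 0 := by rw [hR₀]; exact hP'pos.ne'
  have hg : HasDerivAt (fun p => Real.sqrt (P' (R p)))
      (P₂ * (1 / P' ρ₀) / (2 * Real.sqrt (P' (R p₀)))) p₀ := hPR.sqrt hPRne
  set m : ℝ := P₂ * (1 / P' ρ₀) / (2 * Real.sqrt (P' (R p₀))) with hm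
  -- linear part
  have hA : HasFDerivAt (fun q : EuclideanSpace ℝ (Fin d) × ℝ => ⟪q.1, n⟫)
      ((innerSL ℝ n).comp (ContinuousLinearMap.fst ℝ (EuclideanSpace ℝ (Fin d)) ℝ)) (v, p₀) := by
    have h := ((innerSL ℝ n).comp (ContinuousLinearMap.fst ℝ (EuclideanSpace ℝ (Fin d)) ℝ)).hasFDerivAt (x := (v, p₀))
    convert h using 2 with q
    simp [real_inner_comm, mul_comm]
  have hB : HasFDerivAt (fun q : EuclideanSpace ℝ (Fin d) × ℝ => Real.sqrt (P' (R q.2)))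
      (m • ContinuousLinearMap.snd ℝ (EuclideanSpace ℝ (Fin d)) ℝ) (v, p₀) :=
    by have := hg.comp_hasFDerivAt (v, p₀) (hasFDerivAt_snd (𝕜 := ℝ) (p := (v, p₀))); exact this
  have hplus : HasFDerivAt (fun q : EuclideanSpace ℝ (Fin d) × ℝ => ⟪q.1, n⟫ + Real.sqrt (P' (R q.2))) _ (v, p₀) := hA.add hB
  have hminus : HasFDerivAt (fun q : EuclideanSpace ℝ (Fin d) × ℝ => ⟪q.1, n⟫ - Real.sqrt (P' (R q.2))) _ (v, p₀) := hA.sub hB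
  have hval : (c₀ / ρ₀) + c₀ ^ 2 * m = (c₀ / ρ₀) * (1 + ρ₀ * P₂ / (2 * c₀ ^ 2)) := by
    rw [hm, hR₀, ← hc₀, ← hc₀sq]
    field_simp
  have hnn : ⟪n, (c₀ / ρ₀) • n⟫ = c₀ / ρ₀ := by
    rw [real_inner_smul_right, real_inner_self_eq_norm_sq, hn]; ring
  refine ⟨hplus.differentiableAt, ?_, hminus.differentiableAt, ?_, ?_⟩
  · rw [hplus.fderiv]
    simp only [ContinuousLinearMap.add_apply, ContinuousLinearMap.comp_apply,
      ContinuousLinearMap.coe_fst', ContinuousLinearMap.smul_apply,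
      ContinuousLinearMap.coe_snd', innerSL_apply_apply, smul_eq_mul]
    rw [hnn, ← hval]; ring
  · rw [hminus.fderiv]
    simp only [ContinuousLinearMap.sub_apply, ContinuousLinearMap.comp_apply,
      ContinuousLinearMap.coe_fst', ContinuousLinearMap.smul_apply,
      ContinuousLinearMap.coe_snd', innerSL_apply_apply, smul_eq_mul]
    have : ⟪n, -(c₀ / ρ₀) • n⟫ = -(c₀ / ρ₀) := by
      rw [real_inner_smul_right, real_inner_self_eq_norm_sq, hn]; ring
    rw [this, ← hval]; ring
  · intro hG h0
    rw [hplus.fderiv] at h0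
    simp only [ContinuousLinearMap.add_apply, ContinuousLinearMap.comp_apply,
      ContinuousLinearMap.coe_fst', ContinuousLinearMap.smul_apply,
      ContinuousLinearMap.coe_snd', innerSL_apply_apply, smul_eq_mul] at h0
    rw [hnn] at h0
    have hz : (c₀ / ρ₀) * (1 + ρ₀ * P₂ / (2 * c₀ ^ 2)) = 0 := by rw [← hval, ← h0]; ring
    have hpos : 0 < (c₀ / ρ₀) * (1 + ρ₀ * P₂ / (2 * c₀ ^ 2)) := by positivity
    exact absurd hz hpos.ne'
end
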